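/- arXiv:2511.20047 — 8 statements merged into one kernel-verified Lean document; each statement's English description precedes it below -/
import Mathlib

section
/- There exists ε₀ > 0 such that the following holds for every ε ∈ (0, ε₀). Let n, n₁, …, n_m be unit vectors in EuclideanSpace ℝ (Fin 3) such that the angle between any two distinct vectors among n, n₁, …, n_m is at least 10 * ε^(2/3). Let a₁, …, a_m ∈ ℝ, let K = (Metric.closedBall 0 1) ∩ ⋂_{i=1}^m {x | ⟪n_i, x⟫ ≤ a_i}, assume K is nonempty, and let M = sup_{x ∈ K} ⟪n, x⟫. Then for every v with ⟪n, v⟫ = M − ε, the planar disk {x | ⟪n, x⟫ = M − ε ∧ ‖x − v‖ ≤ 10 * ε^(1/3)} is NOT contained in K. -/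
open RealInnerProductSpace

lemma exists_unit_orth (n : EuclideanSpace ℝ (Fin 3)) (hn : ‖n‖ = 1) :
    ∃ u : EuclideanSpace ℝ (Fin 3), ‖u‖ = 1 ∧ ⟪n, u⟫ = 0 := by
  have hn0 : n ≠ 0 := by intro h; rw [h] at hn; simp at hn
  have hspan : (Submodule.span ℝ {n} : Submodule ℝ (EuclideanSpace ℝ (Fin 3))) ≠ ⊤ := by
    intro h
    have h1 : Module.finrank ℝ (Submodule.span ℝ {n} : Submodule ℝ (EuclideanSpace ℝ (Fin 3))) = 1 :=
      finrank_span_singleton hn0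
    rw [h, finrank_top] at h1
    have h3 : Module.finrank ℝ (EuclideanSpace ℝ (Fin 3)) = 3 := finrank_euclideanSpace_fin
    omega
  obtain ⟨w₀, hw₀⟩ : ∃ w₀, w₀ ∉ Submodule.span ℝ ({n} : Set (EuclideanSpace ℝ (Fin 3))) := by
    by_contra h
    push_neg at h
    exact hspan (Submodule.eq_top_iff'.2 h)
  set w := w₀ - ⟪n, w₀⟫ • n with hwdef
  have hw0 : w ≠ 0 := by
    intro h
    exact hw₀ ((sub_eq_zero.mp h) ▸ Submodule.smul_mem _ _ (Submodule.mem_span_singleton_self n))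
  have hnn : ⟪n, n⟫ = 1 := by
    rw [real_inner_self_eq_norm_mul_norm, hn]; norm_num
  have hnw : ⟪n, w⟫ = 0 := by
    rw [hwdef, inner_sub_right, real_inner_smul_right, hnn]; ring
  refine ⟨‖w‖⁻¹ • w, ?_, ?_⟩
  · rw [norm_smul, norm_inv, norm_norm]
    field_simp [norm_ne_zero_iff.mpr hw0]
  · rw [real_inner_smul_right, hnw]; ring

/-- Lemma 1: the face `K ∩ {⟪n,·⟫ = M - ε}` contains no disk of radius `10 ε^{1/3}`. -/
theorem stmt_1 :
    ∃ ε₀ : ℝ, 0 < ε₀ ∧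
      ∀ ε : ℝ, ε ∈ Set.Ioo (0 : ℝ) ε₀ →
        ∀ (m : ℕ) (n : EuclideanSpace ℝ (Fin 3)) (nv : Fin m → EuclideanSpace ℝ (Fin 3))
          (a : Fin m → ℝ),
          ‖n‖ = 1 → (∀ i, ‖nv i‖ = 1) →
          (∀ i, InnerProductGeometry.angle n (nv i) ≥ 10 * ε ^ ((2 : ℝ) / 3)) →
          (∀ i j, i ≠ j → InnerProductGeometry.angle (nv i) (nv j) ≥ 10 * ε ^ ((2 : ℝ) / 3)) →
          ∀ K : Set (EuclideanSpace ℝ (Fin 3)),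
            K = Metric.closedBall 0 1 ∩ ⋂ i, {x | ⟪nv i, x⟫ ≤ a i} →
            K.Nonempty →
            ∀ M : ℝ, M = sSup ((fun x => ⟪n, x⟫) '' K) →
              ∀ v : EuclideanSpace ℝ (Fin 3), ⟪n, v⟫ = M - ε →
                ¬ ({x | ⟪n, x⟫ = M - ε ∧ ‖x - v‖ ≤ 10 * ε ^ ((1 : ℝ) / 3)} ⊆ K) := by
  refine ⟨1/1000000, by norm_num, ?_⟩
  rintro ε ⟨hε0, hε1⟩ m n nv a hn hnv hang _ K hK _ M hM v hv hsub
  -- abbreviation p = ε^{1/3}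
  set p : ℝ := ε ^ ((1:ℝ)/3) with hpdef
  clear_value p
  have hp0 : 0 < p := by rw [hpdef]; exact Real.rpow_pos_of_pos hε0 _
  have hp3 : p ^ 3 = ε := by
    rw [hpdef, ← Real.rpow_natCast (ε ^ ((1:ℝ)/3)) 3, ← Real.rpow_mul hε0.le]
    norm_num
  have hp2 : ε ^ ((2:ℝ)/3) = p ^ 2 := by
    rw [hpdef, ← Real.rpow_natCast (ε ^ ((1:ℝ)/3)) 2, ← Real.rpow_mul hε0.le]
    norm_num
  have hple : p ≤ 1/100 := by
    by_contra h
    push_neg at h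
    have : (1/100 : ℝ)^3 < p ^ 3 := by
      apply pow_lt_pow_left₀ h (by norm_num)
      norm_num
    rw [hp3] at this
    norm_num at this
    linarith
  -- membership criterion
  have hmem : ∀ x : EuclideanSpace ℝ (Fin 3),
      x ∈ K ↔ ‖x‖ ≤ 1 ∧ ∀ i, ⟪nv i, x⟫ ≤ a i := by
    intro x
    simp [hK, Set.mem_iInter, mem_closedBall_zero_iff]
  -- M is an upper bound
  have hub : ∀ x ∈ K, ⟪n, x⟫ ≤ M := by
    intro x hx
    rw [hM]
    apply le_csSup
    · refine ⟨1, ?_⟩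
      rintro y ⟨z, hz, rfl⟩
      calc ⟪n, z⟫ ≤ ‖n‖ * ‖z‖ := real_inner_le_norm n z
        _ ≤ 1 := by rw [hn, one_mul]; exact ((hmem z).1 hz).1
    · exact ⟨x, hx, rfl⟩
  -- points of the disk
  have hD : ∀ u : EuclideanSpace ℝ (Fin 3), ‖u‖ = 1 → ⟪n, u⟫ = 0 →
      v + (10 * p) • u ∈ K := by
    intro u hu1 hu2
    apply hsub
    constructor
    · rw [inner_add_right, hv, real_inner_smul_right, hu2]; ring
    · rw [add_sub_cancel_left, norm_smul, hu1, mul_one, Real.norm_of_nonneg (by positivity)]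
  have hvK : v ∈ K := by
    apply hsub
    refine ⟨hv, ?_⟩
    simp only [sub_self, norm_zero]
    positivity
  have hv1 : ‖v‖ ≤ 1 := ((hmem v).1 hvK).1
  have hva : ∀ i, ⟪nv i, v⟫ ≤ a i := ((hmem v).1 hvK).2
  -- ball slack: ‖v‖² + (10p)² ≤ 1
  obtain ⟨u₀, hu₀1, hu₀2⟩ := exists_unit_orth n hn
  obtain ⟨u, hu1, hu2, hu3⟩ : ∃ u : EuclideanSpace ℝ (Fin 3),
      ‖u‖ = 1 ∧ ⟪n, u⟫ = 0 ∧ 0 ≤ ⟪v, u⟫ := by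
    rcases le_or_gt 0 ⟪v, u₀⟫ with h | h
    · exact ⟨u₀, hu₀1, hu₀2, h⟩
    · refine ⟨-u₀, by simpa using hu₀1, by rw [inner_neg_right, hu₀2]; ring, ?_⟩
      rw [inner_neg_right]
      linarith
  have hball : ‖v‖ ^ 2 + (10 * p) ^ 2 ≤ 1 := by
    have hx : ‖v + (10 * p) • u‖ ≤ 1 := ((hmem _).1 (hD u hu1 hu2)).1
    have hnorm : ‖v + (10 * p) • u‖ ^ 2
        = ‖v‖ ^ 2 + 2 * ((10 * p) * ⟪v, u⟫) + (10 * p) ^ 2 := by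
      rw [norm_add_sq_real, real_inner_smul_right, norm_smul, hu1, mul_one,
        Real.norm_of_nonneg (by positivity : (0:ℝ) ≤ 10 * p)]
    have hx2 : ‖v + (10 * p) • u‖ ^ 2 ≤ 1 := by
      nlinarith [norm_nonneg (v + (10 * p) • u)]
    nlinarith [mul_nonneg hp0.le hu3]
  -- the sine bounds
  set s : ℝ := Real.sin (10 * p ^ 2) with hsdef
  clear_value s
  have hθ0 : (0:ℝ) < 10 * p ^ 2 := by positivity
  have hθ1 : 10 * p ^ 2 ≤ 1 := by nlinarith
  have hs_lb : 10 * p ^ 2 - (10 * p ^ 2) ^ 3 / 4 < s := by rw [hsdef]; exact lt_of_le_of_lt (by linarith [pow_pos hθ0 3]) (Real.sin_gt_sub_cube hθ0)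
  have hs_ub : s ≤ 10 * p ^ 2 := by rw [hsdef]; exact Real.sin_le hθ0.le
  have hs_pos : 0 < s := by nlinarith
  set t : ℝ := (10 * p) * s with htdef
  clear_value t
  have ht_pos : 0 < t := by rw [htdef]; exact mul_pos (by positivity) hs_pos
  have h1 : (10 * p) * (10 * p ^ 2 - (10 * p ^ 2) ^ 3 / 4) < t := by
    rw [htdef]
    exact mul_lt_mul_of_pos_left hs_lb (by positivity)
  have hp4 : p ^ 4 ≤ (1/100 : ℝ) ^ 4 := pow_le_pow_left₀ hp0.le hple 4
  have hp43 : p ^ 4 * p ^ 3 ≤ (1/100 : ℝ) ^ 4 * p ^ 3 :=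
    mul_le_mul_of_nonneg_right hp4 (by positivity)
  have ht_gt : ε < t := by
    rw [← hp3]
    have h2 : (10 * p) * (10 * p ^ 2 - (10 * p ^ 2) ^ 3 / 4)
        = 100 * p ^ 3 - 2500 * (p ^ 4 * p ^ 3) := by ring
    rw [h2] at h1
    linarith [hp43, pow_pos hp0 3]
  have ht_ub : t ≤ 100 * p ^ 3 := by
    rw [htdef]
    calc (10 * p) * s ≤ (10 * p) * (10 * p ^ 2) :=
          mul_le_mul_of_nonneg_left hs_ub (by positivity)
      _ = 100 * p ^ 3 := by ring
  -- constraints hold at z := v + t • n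
  have hcons : ∀ i, ⟪nv i, v + t • n⟫ ≤ a i := by
    intro i
    rw [inner_add_right, real_inner_smul_right]
    rcases le_or_gt ⟪nv i, n⟫ 0 with hc | hc
    · have h0 : t * ⟪nv i, n⟫ ≤ 0 := mul_nonpos_of_nonneg_of_nonpos ht_pos.le hc
      linarith [hva i]
    · set c : ℝ := ⟪nv i, n⟫ with hcdef
      clear_value c
      have hc1 : c ≤ 1 := by
        calc c ≤ ‖nv i‖ * ‖n‖ := by rw [hcdef]; exact real_inner_le_norm _ _
          _ = 1 := by rw [hn, hnv i, one_mul]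
      set w : EuclideanSpace ℝ (Fin 3) := nv i - c • n with hwdef
      clear_value w
      have hnn : ⟪n, n⟫ = 1 := by
        rw [real_inner_self_eq_norm_mul_norm, hn]; norm_num
      have hnw : ⟪n, w⟫ = 0 := by
        rw [hwdef, inner_sub_right, real_inner_smul_right, hnn, real_inner_comm, ← hcdef]; ring
      have hw2 : ‖w‖ ^ 2 = 1 - c ^ 2 := by
        have h2 : ‖c • n‖ ^ 2 = c ^ 2 := by
          rw [norm_smul, hn, mul_one, Real.norm_eq_abs, sq_abs]
        rw [hwdef, norm_sub_sq_real, real_inner_smul_right, h2, hnv i, ← hcdef]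
        ring
      -- c ≤ cos(10 p²), hence s ≤ ‖w‖
      have hcos : c ≤ Real.cos (10 * p ^ 2) := by
        have hai : InnerProductGeometry.angle n (nv i) ≥ 10 * p ^ 2 := by
          rw [← hp2]; exact hang i
        have hcosangle : Real.cos (InnerProductGeometry.angle n (nv i)) = c := by
          rw [InnerProductGeometry.cos_angle, hn, hnv i, real_inner_comm, ← hcdef,
            mul_one, div_one]
        calc c = Real.cos (InnerProductGeometry.angle n (nv i)) := hcosangle.symm
          _ ≤ Real.cos (10 * p ^ 2) :=
            Real.cos_le_cos_of_nonneg_of_le_pi hθ0.le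
              (InnerProductGeometry.angle_le_pi n (nv i)) hai
      have hsw : s ≤ ‖w‖ := by
        have hpyth : s ^ 2 + Real.cos (10 * p ^ 2) ^ 2 = 1 := by
          rw [hsdef]; exact Real.sin_sq_add_cos_sq _
        have hcc : c ^ 2 ≤ Real.cos (10 * p ^ 2) ^ 2 := pow_le_pow_left₀ hc.le hcos 2
        have hsq2 : s ^ 2 ≤ ‖w‖ ^ 2 := by rw [hw2]; linarith
        exact (pow_le_pow_iff_left₀ hs_pos.le (norm_nonneg w) (by norm_num)).1 hsq2
      have hw0 : w ≠ 0 := by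
        intro h
        rw [h, norm_zero] at hsw
        linarith
      have hwn0 : ‖w‖ ≠ 0 := norm_ne_zero_iff.mpr hw0
      -- the disk point in direction w
      have hu1 : ‖(‖w‖⁻¹ • w : EuclideanSpace ℝ (Fin 3))‖ = 1 := by
        rw [norm_smul, norm_inv, norm_norm]
        field_simp
      have hu2 : ⟪n, ‖w‖⁻¹ • w⟫ = 0 := by
        rw [real_inner_smul_right, hnw]; ring
      have hxK := ((hmem _).1 (hD _ hu1 hu2)).2 i
      rw [inner_add_right, real_inner_smul_right, real_inner_smul_right] at hxK
      have hinnw : ⟪nv i, w⟫ = 1 - c ^ 2 := by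
        rw [hwdef, inner_sub_right, real_inner_smul_right, real_inner_self_eq_norm_mul_norm,
          hnv i, ← hcdef]
        ring
      rw [hinnw] at hxK
      have hxK' : ⟪nv i, v⟫ + 10 * p * ‖w‖ ≤ a i := by
        have heq : ‖w‖⁻¹ * (1 - c ^ 2) = ‖w‖ := by
          rw [← hw2]
          field_simp
        rw [heq] at hxK
        exact hxK
      -- t * c = 10 p s c ≤ 10 p ‖w‖
      have h4 : s * c ≤ s := mul_le_of_le_one_right hs_pos.le hc1
      have h5 : t * c = 10 * p * (s * c) := by rw [htdef]; ring
      have h6 : s * c ≤ ‖w‖ := le_trans h4 hsw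
      have h7 : t * c ≤ 10 * p * ‖w‖ := by
        rw [h5]
        exact mul_le_mul_of_nonneg_left h6 (by positivity)
      linarith [hxK']
  -- z is in K
  have hzK : v + t • n ∈ K := by
    rw [hmem]
    refine ⟨?_, hcons⟩
    have hMε : M - ε ≤ 1 := by
      rw [← hv]
      calc ⟪n, v⟫ ≤ ‖n‖ * ‖v‖ := real_inner_le_norm _ _
        _ ≤ 1 := by rw [hn, one_mul]; exact hv1
    have hnorm : ‖v + t • n‖ ^ 2 = ‖v‖ ^ 2 + 2 * (t * (M - ε)) + t ^ 2 := by
      rw [norm_add_sq_real, real_inner_smul_right, norm_smul, hn, mul_one,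
        Real.norm_of_nonneg ht_pos.le, real_inner_comm, hv]
    have h2t : 2 * (t * (M - ε)) ≤ 2 * t := by
      have := mul_le_mul_of_nonneg_left hMε ht_pos.le
      linarith
    have ht2 : t ^ 2 ≤ (100 * p ^ 3) ^ 2 := pow_le_pow_left₀ ht_pos.le ht_ub 2
    have hpp : p ^ 3 ≤ (1/100 : ℝ) * p ^ 2 := by
      have h := mul_le_mul_of_nonneg_right hple (sq_nonneg p)
      calc p ^ 3 = p * p ^ 2 := by ring
        _ ≤ (1/100) * p ^ 2 := h
    have h6 : p ^ 2 * p ^ 4 ≤ p ^ 2 * ((1/100 : ℝ) ^ 4) :=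
      mul_le_mul_of_nonneg_left hp4 (sq_nonneg p)
    have hnum : 2 * (100 * p ^ 3) + (100 * p ^ 3) ^ 2 ≤ (10 * p) ^ 2 := by
      linarith [hpp, h6]
    have hsq : ‖v + t • n‖ ^ 2 ≤ 1 := by
      linarith [hnorm, hball, h2t, ht2, hnum, ht_ub]
    have h1sq : ‖v + t • n‖ ^ 2 ≤ 1 ^ 2 := by rw [one_pow]; exact hsq
    exact (pow_le_pow_iff_left₀ (norm_nonneg _) (by norm_num) (by norm_num)).1 h1sq
  -- contradiction
  have hfin := hub _ hzK
  rw [inner_add_right, real_inner_smul_right, real_inner_self_eq_norm_mul_norm, hn, hv] at hfin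
  -- M - ε + t * (1*1) ≤ M
  norm_num at hfin
  linarith
end

section
/- Let K be a nonempty compact convex set in EuclideanSpace ℝ (Fin 3), let n be a unit vector, let ε > 0 and a ∈ ℝ, and let P' = {x | a ≤ ⟪n, x⟫ ≤ a + ε}. Assume K ⊆ {x | ⟪n, x⟫ ≤ a + ε} (the upper boundary plane of P' supports K from above). Then Metric.cthickening 1 (K \ P') ⊆ (Metric.cthickening 1 K) \ {x | ⟪n, x⟫ > a + 1}; in particular, the parallel body of K \ P' at distance 1 is disjoint from the open half-space bounded below by the plane {x | ⟪n, x⟫ = a + 1}, which is the lower boundary plane of the plank P'' = {x | a + 1 ≤ ⟪n, x⟫ ≤ a + 1 + ε} obtained by translating P' a distance 1 in direction n. -/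
set_option maxHeartbeats 1000000


open RealInnerProductSpace

/-- Proposition 1: `B(K \ P') ⊆ B(K) \ Π`, where `Π` is the open half-space above the
lower boundary plane of the plank `P'` translated by distance 1 in direction `n`. -/
theorem stmt_3 (K : Set (EuclideanSpace ℝ (Fin 3))) (hKne : K.Nonempty)
    (hKc : IsCompact K) (hKconv : Convex ℝ K)
    (n : EuclideanSpace ℝ (Fin 3)) (hn : ‖n‖ = 1) (ε : ℝ) (hε : 0 < ε) (a : ℝ)
    (P' : Set (EuclideanSpace ℝ (Fin 3)))
    (hP' : P' = {x | a ≤ ⟪n, x⟫ ∧ ⟪n, x⟫ ≤ a + ε})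
    (hsup : K ⊆ {x | ⟪n, x⟫ ≤ a + ε}) :
    Metric.cthickening 1 (K \ P') ⊆
      Metric.cthickening 1 K \ {x | ⟪n, x⟫ > a + 1} := by
  intro x hx
  refine ⟨Metric.cthickening_subset_of_subset 1 Set.diff_subset hx, ?_⟩
  simp only [Set.mem_setOf_eq, not_lt]
  by_contra hcon
  push_neg at hcon
  set δ : ℝ := ⟪n, x⟫ - (a + 1) with hδ
  have hδpos : 0 < δ := sub_pos.mpr hcon
  have hlt : EMetric.infEdist x (K \ P') < ENNReal.ofReal (1 + δ) := by
    have h1 : EMetric.infEdist x (K \ P') ≤ ENNReal.ofReal 1 :=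
      (Metric.mem_cthickening_iff ..).mp hx
    have : ENNReal.ofReal 1 < ENNReal.ofReal (1 + δ) :=
      ENNReal.ofReal_lt_ofReal_iff_of_nonneg (by norm_num) |>.mpr (by linarith)
    exact lt_of_le_of_lt h1 this
  obtain ⟨w, hw, hdw⟩ := EMetric.infEdist_lt_iff.mp hlt
  have hdist : dist x w < 1 + δ := by
    rw [edist_dist] at hdw
    exact (ENNReal.ofReal_lt_ofReal_iff_of_nonneg dist_nonneg).mp hdw
  have hwK : w ∈ K := hw.1
  have hwle : ⟪n, w⟫ ≤ a + ε := hsup hwK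
  have hwlt : ⟪n, w⟫ < a := by
    by_contra h
    push_neg at h
    exact hw.2 (hP' ▸ ⟨h, hwle⟩)
  have hinner : ⟪n, x⟫ - ⟪n, w⟫ ≤ dist x w := by
    have := real_inner_le_norm n (x - w)
    rw [inner_sub_right] at this
    calc ⟪n, x⟫ - ⟪n, w⟫ ≤ ‖n‖ * ‖x - w‖ := this
      _ = dist x w := by rw [hn, one_mul, dist_eq_norm]
  linarith
end

section
/- Let K be a nonempty compact convex set in EuclideanSpace ℝ (Fin 3) and let n be a unit vector. Then there exists k ∈ K such that Metric.closedBall k 1 ⊆ Metric.cthickening 1 K and for every x ∈ Metric.cthickening 1 K one has ⟪n, x⟫ ≤ ⟪n, k⟫ + 1. In particular, the point s = k + n lies in Metric.closedBall k 1, attains the maximum of ⟪n, ·⟫ over Metric.cthickening 1 K, and the unit ball Metric.closedBall k 1 touches the boundary of the parallel body at this highest point s in direction n. -/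
open RealInnerProductSpace

/-- Proposition 2: the parallel body `B(K)` contains a unit ball touching its boundary
at the point of `B(K)` that is highest in direction `n`. -/
theorem stmt_4 (K : Set (EuclideanSpace ℝ (Fin 3))) (hKne : K.Nonempty)
    (hKc : IsCompact K) (hKconv : Convex ℝ K)
    (n : EuclideanSpace ℝ (Fin 3)) (hn : ‖n‖ = 1) :
    ∃ k ∈ K, Metric.closedBall k 1 ⊆ Metric.cthickening 1 K ∧
      ∀ x ∈ Metric.cthickening 1 K, ⟪n, x⟫ ≤ ⟪n, k⟫ + 1 := by
  obtain ⟨k, hkK, hmax⟩ := hKc.exists_isMaxOn hKne (Continuous.continuousOn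
    ((continuous_const.inner continuous_id :
      Continuous fun y : EuclideanSpace ℝ (Fin 3) => ⟪n, y⟫)))
  refine ⟨k, hkK, ?_, ?_⟩
  · intro y hy
    exact Metric.mem_cthickening_of_dist_le y k 1 K hkK (by simpa [dist_comm] using hy)
  · intro x hx
    have hinf : Metric.infDist x K ≤ 1 :=
      ENNReal.toReal_le_of_le_ofReal zero_le_one (Metric.mem_cthickening_iff.mp hx)
    obtain ⟨w, hwK, hdw⟩ := hKc.exists_infDist_eq_dist hKne x
    have hxw : ‖x - w‖ ≤ 1 := by
      rw [← dist_eq_norm, ← hdw]; exact hinf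
    calc ⟪n, x⟫ = ⟪n, w⟫ + ⟪n, x - w⟫ := by rw [← inner_add_right]; congr 1; abel
      _ ≤ ⟪n, k⟫ + ‖n‖ * ‖x - w‖ := add_le_add (hmax hwK) (real_inner_le_norm n _)
      _ ≤ ⟪n, k⟫ + 1 := by rw [hn, one_mul]; exact add_le_add_right hxw _
end

section
/- Let X be a compact convex subset of EuclideanSpace ℝ (Fin 2) with diameter at most 2, let r ∈ (0, 1], and assume that X contains no closed disk of radius r, i.e., there is no v with Metric.closedBall v r ⊆ X. Then the Lebesgue measure (area) of X is at most 6 * r. -/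
open MeasureTheory Metric Set
open scoped RealInnerProductSpace

notation "E2" => EuclideanSpace ℝ (Fin 2)

noncomputable def perp2 (u : E2) : E2 := !₂[-(u 1), u 0]
noncomputable def phi3 (p : (ℝ × ℝ) × E2 × E2 × E2) : E2 :=
  p.1.1 • p.2.1 + (1 - p.1.1) • (p.1.2 • p.2.2.1 + (1 - p.1.2) • p.2.2.2)

lemma inner_eq2 (u x : E2) : ⟪u, x⟫ = u 0 * x 0 + u 1 * x 1 := by
  simp [PiLp.inner_apply, RCLike.inner_apply, Fin.sum_univ_two]
  ring

lemma norm_perp2 (u : E2) : ‖perp2 u‖ = ‖u‖ := by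
  rw [EuclideanSpace.norm_eq, EuclideanSpace.norm_eq]
  have h0 : (perp2 u) 0 = -(u 1) := rfl
  have h1 : (perp2 u) 1 = u 0 := rfl
  rw [Fin.sum_univ_two, Fin.sum_univ_two, h0, h1, norm_neg]
  rw [add_comm]

lemma triple_of_card_le_three {α : Type*} (t : Finset α) (hne : t.Nonempty) (h : t.card ≤ 3) :
    ∃ a b c, a ∈ t ∧ b ∈ t ∧ c ∈ t ∧ ↑t ⊆ ({a, b, c} : Set α) := by
  obtain ⟨a0, ha0⟩ := hne
  set l := t.toList with hl
  have hlen : l.length ≤ 3 := by rw [hl, Finset.length_toList]; exact h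
  have hmemD : ∀ n : ℕ, l.getD n a0 ∈ t := by
    intro n
    by_cases hn : n < l.length
    · rw [List.getD_eq_getElem l a0 hn]
      have : l[n] ∈ l := List.getElem_mem hn
      exact Finset.mem_toList.1 this
    · rw [List.getD_eq_default l a0 (by omega)]; exact ha0
  refine ⟨l.getD 0 a0, l.getD 1 a0, l.getD 2 a0, hmemD 0, hmemD 1, hmemD 2, ?_⟩
  intro x hx
  have hxl : x ∈ l := by rw [hl, Finset.mem_toList]; exact hx
  obtain ⟨⟨i, hi⟩, hget⟩ := List.mem_iff_get.1 hxl
  have hget' : l[i] = x := hget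
  have hi3 : i < 3 := by omega
  interval_cases i
  · left; rw [← hget', List.getD_eq_getElem l a0 hi]
  · right; left; rw [← hget', List.getD_eq_getElem l a0 hi]
  · right; right; rw [← hget', List.getD_eq_getElem l a0 hi]; rfl

lemma convexHull_eq_image3 (S : Set E2) :
    convexHull ℝ S = phi3 '' ((Set.Icc (0:ℝ) 1 ×ˢ Set.Icc (0:ℝ) 1) ×ˢ S ×ˢ S ×ˢ S) := by
  apply Set.Subset.antisymm
  · -- hard direction, via Caratheodory
    intro x hx
    rw [convexHull_eq_union] at hx
    obtain ⟨t, hai, hts, hxt⟩ := by simpa using hx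
    have hne : t.Nonempty := by
      rcases t.eq_empty_or_nonempty with rfl | h
      · simp at hxt
      · exact h
    have hcard : t.card ≤ 3 := by
      have := hai.card_le_finrank_succ
      have h2 : Module.finrank ℝ ↥(vectorSpan ℝ (Set.range (Subtype.val : t → E2))) ≤ 2 := by
        have := Submodule.finrank_le (vectorSpan ℝ (Set.range (Subtype.val : t → E2)))
        rwa [finrank_euclideanSpace_fin] at this
      have hc : Fintype.card t = t.card := Fintype.card_coe t
      omega
    obtain ⟨a, b, c, hat, hbt, hct, hsub⟩ := triple_of_card_le_three t hne hcard
    have hx3 : x ∈ convexHull ℝ ({a, b, c} : Set E2) := convexHull_mono hsub hxt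
    rw [show ({a, b, c} : Set E2) = insert a {b, c} from rfl,
      convexHull_insert ⟨b, by simp⟩, convexHull_pair] at hx3
    rw [mem_convexJoin] at hx3
    obtain ⟨p, hp, z, hz, hxseg⟩ := hx3
    rw [Set.mem_singleton_iff] at hp
    subst hp
    rw [segment_eq_image] at hxseg hz
    obtain ⟨θ, hθ, hxe⟩ := hxseg
    obtain ⟨μ, hμ, hze⟩ := hz
    refine ⟨((1 - θ, 1 - μ), p, b, c), ?_, ?_⟩
    · refine ⟨⟨?_, ?_⟩, hts hat, hts hbt, hts hct⟩ <;>
        constructor <;> simp at hθ hμ ⊢ <;> linarith [hθ.1, hθ.2, hμ.1, hμ.2]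
    · simp only [phi3, ← hxe, ← hze]
      have : (1:ℝ) - (1 - θ) = θ := by ring
      rw [this]
      have : (1:ℝ) - (1 - μ) = μ := by ring
      rw [this]
  · rintro _ ⟨⟨⟨a', b'⟩, u1, u2, u3⟩, ⟨⟨ha', hb'⟩, hu1, hu2, hu3⟩, rfl⟩
    simp only [Set.mem_Icc] at ha' hb'
    have h1 : u1 ∈ convexHull ℝ S := subset_convexHull ℝ S hu1
    have h2 : u2 ∈ convexHull ℝ S := subset_convexHull ℝ S hu2
    have h3 : u3 ∈ convexHull ℝ S := subset_convexHull ℝ S hu3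
    have hz : b' • u2 + (1 - b') • u3 ∈ convexHull ℝ S :=
      (convex_convexHull ℝ S) h2 h3 hb'.1 (by linarith [hb'.2]) (by ring)
    exact (convex_convexHull ℝ S) h1 hz ha'.1 (by linarith [ha'.2]) (by ring)

lemma isCompact_convexHull2 {S : Set E2} (hS : IsCompact S) : IsCompact (convexHull ℝ S) := by
  rw [convexHull_eq_image3]
  apply IsCompact.image
  · exact ((isCompact_Icc.prod isCompact_Icc).prod (hS.prod (hS.prod hS)))
  · unfold phi3
    fun_prop

lemma vol_slab (u : E2) (hu : ‖u‖ = 1) (X : Set E2) (A B C D : ℝ)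
    (h1 : ∀ x ∈ X, ⟪u, x⟫ ∈ Set.Icc A B)
    (h2 : ∀ x ∈ X, ⟪perp2 u, x⟫ ∈ Set.Icc C D) :
    volume X ≤ ENNReal.ofReal (B - A) * ENNReal.ofReal (D - C) := by
  have hnormsq : u 0 ^ 2 + u 1 ^ 2 = 1 := by
    have := EuclideanSpace.norm_eq u
    rw [hu] at this
    have h2' : Real.sqrt (∑ i : Fin 2, ‖u i‖ ^ 2) = 1 := this.symm
    rw [Fin.sum_univ_two] at h2'
    have := Real.sqrt_eq_one.mp h2'
    simpa [Real.norm_eq_abs, sq_abs] using this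
  set M : Matrix (Fin 2) (Fin 2) ℝ := !![u 0, u 1; -(u 1), u 0] with hM
  set f : E2 →ₗ[ℝ] E2 := Matrix.toEuclideanLin M with hf
  have hdet : LinearMap.det f = 1 := by
    rw [hf, Matrix.toEuclideanLin_eq_toLin, LinearMap.det_toLin, hM,
      Matrix.det_fin_two_of]
    nlinarith [hnormsq]
  have happ0 : ∀ x : E2, f x 0 = ⟪u, x⟫ := by
    intro x
    rw [hf, Matrix.toEuclideanLin_apply, inner_eq2]
    show M.mulVec _ 0 = _
    rw [Matrix.mulVec, hM]
    show (dotProduct ![u 0, u 1] _) = _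
    rw [dotProduct, Fin.sum_univ_two]
    rfl
  have happ1 : ∀ x : E2, f x 1 = ⟪perp2 u, x⟫ := by
    intro x
    rw [hf, Matrix.toEuclideanLin_apply, inner_eq2]
    show M.mulVec _ 1 = _
    rw [Matrix.mulVec, hM]
    show (dotProduct ![-(u 1), u 0] _) = _
    rw [dotProduct, Fin.sum_univ_two]
    rfl
  set B0 : Set E2 := {z : E2 | z 0 ∈ Set.Icc A B ∧ z 1 ∈ Set.Icc C D} with hB0
  have hsub : X ⊆ ⇑f ⁻¹' B0 := by
    intro x hx
    simp only [Set.mem_preimage, hB0, Set.mem_setOf_eq, happ0 x, happ1 x]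
    exact ⟨h1 x hx, h2 x hx⟩
  have hvol : volume (⇑f ⁻¹' B0) = ENNReal.ofReal (B - A) * ENNReal.ofReal (D - C) := by
    rw [Measure.addHaar_preimage_linearMap volume (by rw [hdet]; exact one_ne_zero) B0]
    rw [hdet]
    norm_num
    -- now volume B0
    have hB0' : B0 = ⇑(MeasurableEquiv.toLp 2 (Fin 2 → ℝ)).symm ⁻¹'
        (Set.univ.pi fun i : Fin 2 => Set.Icc (![A, C] i) (![B, D] i)) := by
      ext z
      simp [hB0, Set.mem_pi, Fin.forall_fin_two, Pi.le_def, MeasurableEquiv.coe_toLp_symm]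
      tauto
    rw [hB0', (EuclideanSpace.volume_preserving_symm_measurableEquiv_toLp (Fin 2)).measure_preimage
      ((MeasurableSet.univ_pi fun i => measurableSet_Icc).nullMeasurableSet)]
    rw [volume_pi_pi, Fin.prod_univ_two]
    simp [Real.volume_Icc]
  calc volume X ≤ volume (⇑f ⁻¹' B0) := measure_mono hsub
    _ = _ := hvol

lemma slab_lower (c : E2) (ρ : ℝ) (hρ : 0 ≤ ρ) (X : Set E2) (u₁ u₂ u₃ : E2) (w₁ w₂ w₃ : ℝ)
    (hcomb : w₁ • u₁ + w₂ • u₂ + w₃ • u₃ = 0) (hw₁ : 1/3 ≤ w₁) (h2 : 0 ≤ w₂) (h3 : 0 ≤ w₃)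
    (hsum : w₁ + w₂ + w₃ = 1)
    (hb1 : ∀ x ∈ X, ⟪u₁, x - c⟫ ≤ ρ) (hb2 : ∀ x ∈ X, ⟪u₂, x - c⟫ ≤ ρ)
    (hb3 : ∀ x ∈ X, ⟪u₃, x - c⟫ ≤ ρ) :
    ∀ x ∈ X, -(2*ρ) ≤ ⟪u₁, x - c⟫ := by
  intro x hx
  have h0 : ⟪w₁ • u₁ + w₂ • u₂ + w₃ • u₃, x - c⟫ = 0 := by rw [hcomb]; exact inner_zero_left _
  rw [inner_add_left, inner_add_left, real_inner_smul_left, real_inner_smul_left,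
    real_inner_smul_left] at h0
  nlinarith [hb1 x hx, hb2 x hx, hb3 x hx, mul_le_mul_of_nonneg_left (hb2 x hx) h2,
    mul_le_mul_of_nonneg_left (hb3 x hx) h3, hw₁, hρ]

set_option maxHeartbeats 1000000 in
/-- Planar estimate: a compact convex set of diameter at most 2 that contains no closed
disk of radius `r` has area at most `6 r`. -/
theorem stmt_5 (X : Set (EuclideanSpace ℝ (Fin 2))) (hXc : IsCompact X)
    (hXconv : Convex ℝ X) (hdiam : Metric.diam X ≤ 2) (r : ℝ) (hr : r ∈ Set.Ioc (0 : ℝ) 1)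
    (hnodisk : ¬ ∃ v : EuclideanSpace ℝ (Fin 2), Metric.closedBall v r ⊆ X) :
    volume X ≤ ENNReal.ofReal (6 * r) := by
  obtain ⟨hr0, hr1⟩ := hr
  rcases X.eq_empty_or_nonempty with rfl | hne
  · rw [measure_empty]; exact zero_le
  rcases eq_or_ne (interior X) ∅ with hint | hint
  · -- empty interior: measure zero
    have hXfr : X ⊆ frontier X := by
      intro x hx
      rw [frontier, hint, diff_empty]
      exact subset_closure hx
    calc volume X ≤ volume (frontier X) := measure_mono hXfr
      _ = 0 := hXconv.addHaar_frontier volume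
      _ ≤ _ := zero_le
  -- complement nonempty
  obtain ⟨x₀, hx₀⟩ := hne
  have hcne : Xᶜ.Nonempty := by
    refine ⟨x₀ + (4:ℝ) • EuclideanSpace.single 0 1, fun hmem => ?_⟩
    have hd : dist (x₀ + (4:ℝ) • EuclideanSpace.single 0 1) x₀ ≤ 2 :=
      le_trans (dist_le_diam_of_mem hXc.isBounded hmem hx₀) hdiam
    rw [dist_self_add_left, norm_smul, EuclideanSpace.norm_single] at hd
    norm_num at hd
  -- maximal inscribed ball
  obtain ⟨c, hcX, hmax⟩ := hXc.exists_isMaxOn ⟨x₀, hx₀⟩ (continuous_infDist_pt Xᶜ).continuousOn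
  set ρ : ℝ := infDist c Xᶜ with hρdef
  have hρ0 : 0 ≤ ρ := infDist_nonneg
  have hρpos : 0 < ρ := by
    obtain ⟨x₁, hx₁⟩ := Set.nonempty_iff_ne_empty.2 hint
    obtain ⟨ε, hε0, hball⟩ := Metric.isOpen_iff.1 isOpen_interior x₁ hx₁
    have h1 : ε ≤ infDist x₁ Xᶜ := by
      by_contra hlt
      push_neg at hlt
      obtain ⟨y, hyc, hyd⟩ := (infDist_lt_iff hcne).1 hlt
      exact hyc (interior_subset (hball (mem_ball'.2 hyd)))
    have h2 : infDist x₁ Xᶜ ≤ ρ := hmax (interior_subset hx₁)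
    linarith
  have hball : closedBall c ρ ⊆ X := by
    intro z hz
    by_contra hzX
    have hzc : z ∈ Xᶜ := hzX
    have h1 : ρ ≤ dist c z := infDist_le_dist_of_mem hzc
    have h2 : dist c z ≤ ρ := by rwa [dist_comm, ← mem_closedBall]
    have heq : dist c z = ρ := le_antisymm h2 h1
    obtain ⟨ε', hε'0, hballz⟩ := Metric.isOpen_iff.1 (hXc.isClosed.isOpen_compl) z hzc
    set t : ℝ := min (ε' / (2 * ρ)) (1/2) with ht
    have ht0 : 0 < t := lt_min (by positivity) (by norm_num)
    have ht1 : t ≤ 1/2 := min_le_right _ _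
    set z' : E2 := c + (1 - t) • (z - c) with hz'
    have hzz' : dist z' z = t * ρ := by
      rw [hz', dist_eq_norm]
      have : c + (1 - t) • (z - c) - z = -(t • (z - c)) := by
        rw [sub_smul, one_smul]; abel
      rw [this, norm_neg, norm_smul, Real.norm_eq_abs, abs_of_pos ht0]
      rw [← dist_eq_norm, dist_comm, heq]
    have hz'mem : z' ∈ Xᶜ := by
      apply hballz
      rw [mem_ball, hzz']
      calc t * ρ ≤ (ε' / (2 * ρ)) * ρ := by
            apply mul_le_mul_of_nonneg_right (min_le_left _ _) hρ0
          _ = ε' / 2 := by field_simp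
          _ < ε' := by linarith
    have hcz' : dist c z' = (1 - t) * ρ := by
      rw [hz', dist_eq_norm]
      have : c - (c + (1 - t) • (z - c)) = -((1-t) • (z - c)) := by abel
      rw [this, norm_neg, norm_smul, Real.norm_eq_abs, abs_of_pos (by linarith : (0:ℝ) < 1 - t)]
      rw [← dist_eq_norm, dist_comm, heq]
    have : ρ ≤ dist c z' := infDist_le_dist_of_mem hz'mem
    nlinarith
  have hρr : ρ < r := by
    by_contra hle
    push_neg at hle
    exact hnodisk ⟨c, fun z hz => hball (closedBall_subset_closedBall hle hz)⟩
  -- contact directions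
  set S : Set E2 := {u : E2 | ‖u‖ = 1 ∧ c + ρ • u ∈ closure Xᶜ} with hS
  have hρy : ∀ y ∈ closure Xᶜ, ρ ≤ dist c y := by
    intro y hy
    have h := infDist_le_dist_of_mem (x := c) hy
    rwa [infDist_closure] at h
  have hSmem : ∀ y ∈ closure Xᶜ, dist c y = ρ → ρ⁻¹ • (y - c) ∈ S := by
    intro y hy hdy
    constructor
    · rw [norm_smul, Real.norm_eq_abs, abs_of_pos (by positivity)]
      rw [← dist_eq_norm', hdy]  -- ‖y - c‖ = dist y c ... check
      field_simp
    · have : c + ρ • ρ⁻¹ • (y - c) = y := by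
        rw [smul_smul, mul_inv_cancel₀ (ne_of_gt hρpos), one_smul]; abel
      rwa [this]
  have hSne : S.Nonempty := by
    obtain ⟨y, hy, hdy⟩ := isClosed_closure.exists_infDist_eq_dist
      (hcne.mono subset_closure) c
    rw [infDist_closure] at hdy
    exact ⟨_, hSmem y hy hdy.symm⟩
  have hScpt : IsCompact S := by
    apply isCompact_of_isClosed_isBounded
    · apply IsClosed.inter
      · exact isClosed_eq continuous_norm continuous_const
      · exact IsClosed.preimage (continuous_const.add (continuous_id.const_smul ρ))
          isClosed_closure
    · apply Bornology.IsBounded.subset (isBounded_closedBall (x := (0:E2)) (r := 1))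
      intro u hu
      simp [mem_closedBall, dist_zero_right, hu.1, hu.1.le]
  -- supporting halfplanes at contact directions
  have hhalf : ∀ u ∈ S, ∀ x ∈ X, ⟪u, x - c⟫ ≤ ρ := by
    rintro u ⟨hun, huc⟩ x hx
    by_contra hp
    push_neg at hp
    set p : ℝ := ⟪u, x - c⟫ with hpdef
    set q : ℝ := ‖x - c‖^2 with hqdef
    have hq0 : 0 ≤ q := sq_nonneg _
    have hpq : p ≤ ‖x - c‖ := by
      have := real_inner_le_norm u (x - c)
      rwa [hun, one_mul] at this
    set δ : ℝ := 2*ρ*(p - ρ) / (2*(ρ^2 + q + 1)) with hδdef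
    have hδ0 : 0 < δ := by
      apply div_pos
      · nlinarith
      · nlinarith
    have hδ1 : δ < 1 := by
      rw [hδdef, div_lt_one (by nlinarith)]
      nlinarith [sq_nonneg (ρ - ‖x - c‖), norm_nonneg (x - c), hpq, hρpos]
    set t : ℝ := 1 - δ with htdef
    have ht0 : 0 < t := by linarith
    have ht1 : t < 1 := by linarith
    set ct : E2 := c + (1 - t) • (x - c) with hct
    have hsubball : closedBall ct (t*ρ) ⊆ X := by
      intro z hz
      set w : E2 := c + t⁻¹ • (z - ct) with hw
      have hwc : w ∈ closedBall c ρ := by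
        rw [mem_closedBall, hw]
        have : c + t⁻¹ • (z - ct) - c = t⁻¹ • (z - ct) := by abel
        rw [dist_eq_norm, this, norm_smul, Real.norm_eq_abs,
          abs_of_pos (by positivity : (0:ℝ) < t⁻¹)]
        have hzd : ‖z - ct‖ ≤ t*ρ := by rwa [mem_closedBall, dist_eq_norm] at hz
        calc t⁻¹ * ‖z - ct‖ ≤ t⁻¹ * (t*ρ) := by
              apply mul_le_mul_of_nonneg_left hzd (by positivity)
          _ = ρ := by field_simp
      have hzeq : z = t • w + (1 - t) • x := by
        rw [hw, smul_add, smul_smul, mul_inv_cancel₀ (ne_of_gt ht0), one_smul, hct]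
        module
      rw [hzeq]
      exact hXconv (hball hwc) hx ht0.le (by linarith) (by ring)
    have hyball : c + ρ • u ∈ Metric.ball ct (t*ρ) := by
      rw [mem_ball, hct, dist_eq_norm]
      have heq : c + ρ • u - (c + (1 - t) • (x - c)) = ρ • u - (1 - t) • (x - c) := by abel
      rw [heq]
      have hsq : ‖ρ • u - (1 - t) • (x - c)‖^2 = ρ^2 - 2*ρ*δ*p + δ^2*q := by
        rw [norm_sub_sq_real, norm_smul, norm_smul, real_inner_smul_left,
          real_inner_smul_right, hun]
        simp only [Real.norm_eq_abs, abs_of_pos hρpos, ← htdef]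
        rw [show (1:ℝ) - t = δ from by rw [htdef]; ring]
        rw [abs_of_pos hδ0]
        ring_nf
        rw [hpdef, hqdef]
      have hlt : ‖ρ • u - (1 - t) • (x - c)‖^2 < (t*ρ)^2 := by
        rw [hsq, htdef]
        have hkey : δ * (2*(ρ^2 + q + 1)) = 2*ρ*(p - ρ) := by
          rw [hδdef]; field_simp
        nlinarith [hρpos, hδ0, hq0, hp, mul_pos hδ0 hρpos]
      have := Real.sqrt_le_sqrt hlt.le
      calc ‖ρ • u - (1 - t) • (x - c)‖
          = Real.sqrt (‖ρ • u - (1 - t) • (x - c)‖^2) := (Real.sqrt_sq (norm_nonneg _)).symm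
        _ < Real.sqrt ((t*ρ)^2) := by
            apply (Real.sqrt_lt_sqrt (sq_nonneg _) hlt)
        _ = t*ρ := Real.sqrt_sq (by positivity)
    obtain ⟨z, hzball, hzc⟩ := _root_.mem_closure_iff.1 huc _ isOpen_ball hyball
    exact hzc (hsubball (ball_subset_closedBall hzball))
  -- 0 in convex hull of contact directions
  have h0T : (0 : E2) ∈ convexHull ℝ S := by
    by_contra h0
    obtain ⟨f, s₀, hf0, hfS⟩ := geometric_hahn_banach_point_closed
      (convex_convexHull ℝ S) (isCompact_convexHull2 hScpt).isClosed h0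
    rw [map_zero] at hf0
    set v : E2 := (InnerProductSpace.toDual ℝ E2).symm f with hvdef
    have hv : ∀ b : E2, ⟪v, b⟫ = f b := fun b => InnerProductSpace.toDual_symm_apply
    have hSv : ∀ u ∈ S, s₀ < ⟪v, u⟫ := by
      intro u hu
      rw [hv]
      exact hfS u (subset_convexHull ℝ S hu)
    set V : ℝ := ‖v‖ with hVdef
    have hV0 : 0 < V := by
      obtain ⟨u₀, hu₀⟩ := hSne
      have h1 : s₀ < ⟪v, u₀⟫ := hSv u₀ hu₀
      have h2 : ⟪v, u₀⟫ ≤ V * ‖u₀‖ := real_inner_le_norm v u₀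
      rw [hu₀.1, mul_one] at h2
      linarith
    set W : Set E2 := (closure Xᶜ ∩ closedBall c (ρ+1)) ∩ {y : E2 | ⟪y - c, v⟫ ≤ ρ*s₀/2}
      with hWdef
    have hWcpt : IsCompact W := by
      apply IsCompact.inter_right
      · exact (isCompact_closedBall c (ρ+1)).inter_left isClosed_closure
      · exact isClosed_le (Continuous.inner (continuous_id.sub continuous_const)
          continuous_const) continuous_const
    have hWρ : ∀ y ∈ W, ρ < dist c y := by
      rintro y ⟨⟨hycl, _⟩, hyv⟩
      rcases lt_or_eq_of_le (hρy y hycl) with h | h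
      · exact h
      · exfalso
        have huS : ρ⁻¹ • (y - c) ∈ S := hSmem y hycl h.symm
        have h1 : s₀ < ⟪v, ρ⁻¹ • (y - c)⟫ := hSv _ huS
        rw [real_inner_smul_right] at h1
        have h2 : ⟪v, y - c⟫ ≤ ρ*s₀/2 := by rw [real_inner_comm]; exact hyv
        have h3 := (mul_lt_mul_iff_right₀ hρpos).2 h1
        rw [← mul_assoc, mul_inv_cancel₀ hρpos.ne', one_mul] at h3
        nlinarith
    set M : Set ℝ := (dist c '' W) ∪ {ρ+1} with hMdef
    have hMcpt : IsCompact M :=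
      (hWcpt.image (continuous_const.dist continuous_id)).union isCompact_singleton
    have hMne : M.Nonempty := ⟨ρ+1, Or.inr rfl⟩
    set m : ℝ := sInf M with hmdef
    have hmρ : ρ < m := by
      have hmem := hMcpt.sInf_mem hMne
      rw [← hmdef] at hmem
      rcases hmem with ⟨y, hy, hdy⟩ | hm1
      · rw [← hdy]; exact hWρ y hy
      · rw [Set.mem_singleton_iff] at hm1
        rw [hm1]; linarith
    have hmle : ∀ y ∈ W, m ≤ dist c y := fun y hy =>
      csInf_le hMcpt.bddBelow (Or.inl ⟨y, hy, rfl⟩)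
    set ε : ℝ := min (min (ρ/V) (1/(2*V))) (min ((m-ρ)/(2*V)) (ρ/s₀)) with hεdef
    have hs₀0 : 0 < s₀ := hf0
    have hε0 : 0 < ε := by
      apply lt_min (lt_min (div_pos hρpos hV0) (by positivity))
      exact lt_min (div_pos (by linarith) (by positivity)) (div_pos hρpos hs₀0)
    have hεV1 : ε*V ≤ ρ := by
      have : ε ≤ ρ/V := le_trans (min_le_left _ _) (min_le_left _ _)
      calc ε*V ≤ (ρ/V)*V := mul_le_mul_of_nonneg_right this hV0.le
        _ = ρ := by field_simp
    have hεV2 : ε*V ≤ 1/2 := by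
      have : ε ≤ 1/(2*V) := le_trans (min_le_left _ _) (min_le_right _ _)
      calc ε*V ≤ (1/(2*V))*V := mul_le_mul_of_nonneg_right this hV0.le
        _ = 1/2 := by field_simp
    have hεV3 : ε*V ≤ (m-ρ)/2 := by
      have : ε ≤ (m-ρ)/(2*V) := le_trans (min_le_right _ _) (min_le_left _ _)
      calc ε*V ≤ ((m-ρ)/(2*V))*V := mul_le_mul_of_nonneg_right this hV0.le
        _ = (m-ρ)/2 := by field_simp
    have hεs : ε*s₀ ≤ ρ := by
      have : ε ≤ ρ/s₀ := le_trans (min_le_right _ _) (min_le_right _ _)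
      calc ε*s₀ ≤ (ρ/s₀)*s₀ := mul_le_mul_of_nonneg_right this hs₀0.le
        _ = ρ := by field_simp
    set κ : ℝ := min (min (1/2) ((m-ρ)/2)) (ε*s₀/4) with hκdef
    have hκ0 : 0 < κ := by
      apply lt_min (lt_min (by norm_num) (by linarith))
      positivity
    have hκ1 : κ ≤ 1/2 := le_trans (min_le_left _ _) (min_le_left _ _)
    have hκ2 : κ ≤ (m-ρ)/2 := le_trans (min_le_left _ _) (min_le_right _ _)
    have hκ3 : κ ≤ ε*s₀/4 := min_le_right _ _
    set c' : E2 := c - ε • v with hc'def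
    have hcc' : dist c c' = ε*V := by
      rw [hc'def, dist_eq_norm]
      have : c - (c - ε • v) = ε • v := by abel
      rw [this, norm_smul, Real.norm_eq_abs, abs_of_pos hε0, hVdef]
    have hc'X : c' ∈ X := by
      apply hball
      rw [mem_closedBall, dist_comm, hcc']
      exact hεV1
    have hclaim : ∀ y ∈ Xᶜ, ρ + κ ≤ dist c' y := by
      intro y hy
      have hdcy : ρ ≤ dist c y := infDist_le_dist_of_mem hy
      have htri : dist c y ≤ dist c c' + dist c' y := dist_triangle c c' y
      rcases le_or_gt (dist c y) (ρ+1) with hnear | hfar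
      · by_cases hyW : ⟪y - c, v⟫ ≤ ρ*s₀/2
        · have hyWmem : y ∈ W := ⟨⟨subset_closure hy, by
            rw [mem_closedBall, dist_comm]; exact hnear⟩, hyW⟩
          have := hmle y hyWmem
          rw [hcc'] at htri
          linarith
        · push_neg at hyW
          have hd2 : (ρ + κ)^2 ≤ dist c' y ^ 2 := by
            have hexp : dist c' y ^ 2 = ‖y - c‖^2 + 2*ε*⟪y - c, v⟫ + ε^2*V^2 := by
              rw [dist_eq_norm']
              have : y - c' = (y - c) + ε • v := by rw [hc'def]; abel
              rw [this, norm_add_sq_real, real_inner_smul_right, norm_smul,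
                Real.norm_eq_abs, abs_of_pos hε0]
              ring
            have hn : ρ^2 ≤ ‖y - c‖^2 := by
              have : ρ ≤ ‖y - c‖ := by rwa [dist_eq_norm'] at hdcy
              nlinarith
            rw [hexp]
            nlinarith [hκ3, hεs, hε0, hs₀0, hρpos, sq_nonneg (ε*V), hyW, hκ0]
          have := Real.sqrt_le_sqrt hd2
          rwa [Real.sqrt_sq (by positivity), Real.sqrt_sq dist_nonneg] at this
      · rw [hcc'] at htri
        linarith
    have h1 : infDist c' Xᶜ ≤ ρ := hmax hc'X
    have h2 : ρ + κ ≤ infDist c' Xᶜ := by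
      by_contra hlt
      push_neg at hlt
      obtain ⟨y, hy, hdy⟩ := (infDist_lt_iff hcne).1 hlt
      linarith [hclaim y hy]
    linarith
  -- extract representation
  rw [convexHull_eq_image3] at h0T
  obtain ⟨⟨⟨a', b'⟩, u1, u2, u3⟩, ⟨⟨ha', hb'⟩, hu1, hu2, hu3⟩, hrep⟩ := h0T
  simp only [Set.mem_Icc] at ha' hb'
  set w₁ : ℝ := a' with hw1
  set w₂ : ℝ := (1 - a') * b' with hw2
  set w₃ : ℝ := (1 - a') * (1 - b') with hw3
  have hw₁0 : 0 ≤ w₁ := ha'.1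
  have hw₂0 : 0 ≤ w₂ := mul_nonneg (by linarith [ha'.2]) hb'.1
  have hw₃0 : 0 ≤ w₃ := mul_nonneg (by linarith [ha'.2]) (by linarith [hb'.2])
  have hwsum : w₁ + w₂ + w₃ = 1 := by rw [hw1, hw2, hw3]; ring
  have hcomb : w₁ • u1 + w₂ • u2 + w₃ • u3 = 0 := by
    rw [← hrep]
    show _ = a' • u1 + (1 - a') • (b' • u2 + (1 - b') • u3)
    rw [smul_add, smul_smul, smul_smul, hw1, hw2, hw3, add_assoc]
  -- find the big weight and conclude the slab bound
  have hslab : ∃ u : E2, u ∈ S ∧ ∀ x ∈ X, ⟪u, x - c⟫ ∈ Set.Icc (-(2*ρ)) ρ := by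
    have hbig : 1/3 ≤ w₁ ∨ 1/3 ≤ w₂ ∨ 1/3 ≤ w₃ := by
      by_contra hc
      push_neg at hc
      obtain ⟨h1, h2, h3⟩ := hc
      linarith
    rcases hbig with hbw | hbw | hbw
    · exact ⟨u1, hu1, fun x hx => ⟨slab_lower c ρ hρ0 X u1 u2 u3 w₁ w₂ w₃ hcomb hbw hw₂0 hw₃0
        hwsum (hhalf u1 hu1) (hhalf u2 hu2) (hhalf u3 hu3) x hx, hhalf u1 hu1 x hx⟩⟩
    · refine ⟨u2, hu2, fun x hx => ⟨slab_lower c ρ hρ0 X u2 u1 u3 w₂ w₁ w₃ ?_ hbw hw₁0 hw₃0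
        (by linarith) (hhalf u2 hu2) (hhalf u1 hu1) (hhalf u3 hu3) x hx, hhalf u2 hu2 x hx⟩⟩
      rw [← hcomb]; abel
    · refine ⟨u3, hu3, fun x hx => ⟨slab_lower c ρ hρ0 X u3 u1 u2 w₃ w₁ w₂ ?_ hbw hw₁0 hw₂0
        (by linarith) (hhalf u3 hu3) (hhalf u1 hu1) (hhalf u2 hu2) x hx, hhalf u3 hu3 x hx⟩⟩
      rw [← hcomb]; abel
  obtain ⟨u, huS, huslab⟩ := hslab
  have hu1n : ‖u‖ = 1 := huS.1
  -- second coordinate bounds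
  set g : E2 → ℝ := fun x => ⟪perp2 u, x⟫ with hg
  have hgdiff : ∀ x ∈ X, ∀ x' ∈ X, g x - g x' ≤ 2 := by
    intro x hx x' hx'
    have h1 : g x - g x' = ⟪perp2 u, x - x'⟫ := by rw [hg]; simp [inner_sub_right]
    have h2 : ⟪perp2 u, x - x'⟫ ≤ ‖perp2 u‖ * ‖x - x'‖ := real_inner_le_norm _ _
    rw [norm_perp2, hu1n, one_mul, ← dist_eq_norm] at h2
    have h3 : dist x x' ≤ 2 := le_trans (dist_le_diam_of_mem hXc.isBounded hx hx') hdiam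
    linarith
  set C : ℝ := sInf (g '' X) with hC
  have hgbdd : BddBelow (g '' X) := by
    refine ⟨g x₀ - 2, ?_⟩
    rintro _ ⟨x, hx, rfl⟩
    have := hgdiff x₀ hx₀ x hx
    linarith
  have hCle : ∀ x ∈ X, C ≤ g x := fun x hx => csInf_le hgbdd ⟨x, hx, rfl⟩
  have hleC : ∀ x ∈ X, g x ≤ C + 2 := by
    intro x hx
    have : g x - 2 ≤ C := by
      apply le_csInf ⟨g x₀, Set.mem_image_of_mem g hx₀⟩
      rintro _ ⟨x', hx', rfl⟩
      linarith [hgdiff x hx x' hx']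
    linarith
  -- apply the box volume bound
  have hvol : volume X ≤ ENNReal.ofReal ((⟪u, c⟫ + ρ) - (⟪u, c⟫ + -(2*ρ))) *
      ENNReal.ofReal ((C + 2) - C) := by
    apply vol_slab u hu1n X _ _ C (C + 2)
    · intro x hx
      have h := huslab x hx
      rw [inner_sub_right] at h
      exact ⟨by linarith [h.1], by linarith [h.2]⟩
    · exact fun x hx => ⟨hCle x hx, hleC x hx⟩
  rw [show (⟪u, c⟫ + ρ) - (⟪u, c⟫ + -(2*ρ)) = 3*ρ from by ring,
    show (C+2) - C = (2:ℝ) from by ring] at hvol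
  calc volume X ≤ _ := hvol
    _ = ENNReal.ofReal (6*ρ) := by
        rw [← ENNReal.ofReal_mul (by positivity : (0:ℝ) ≤ 3*ρ)]
        congr 1
        ring
    _ ≤ ENNReal.ofReal (6*r) := ENNReal.ofReal_le_ofReal (by linarith)
end

section
/- Let ε > 0 and L > 0, and let Q be a convex subset of ℝ × ℝ with Q ⊆ {p | 0 ≤ p.2 ∧ p.2 ≤ ε} and containing the segment {(t, 0) | |t| ≤ L}. Let q ∈ Q with |q.1| ≤ L / 2, and let u = (u₁, u₂) with u₂ > 0 be an outer normal of Q at q, i.e., for all x ∈ Q, u₁ * x.1 + u₂ * x.2 ≤ u₁ * q.1 + u₂ * q.2. Then |u₁| / u₂ ≤ 2 * ε / L. -/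
/-- Two-dimensional supporting-line estimate (Figure 2): a supporting line of a flat
convex set at a point near the middle of its long base is nearly horizontal. -/
theorem stmt_6 (ε L : ℝ) (hε : 0 < ε) (hL : 0 < L) (Q : Set (ℝ × ℝ))
    (hQconv : Convex ℝ Q) (hQsub : Q ⊆ {p : ℝ × ℝ | 0 ≤ p.2 ∧ p.2 ≤ ε})
    (hbase : ∀ t : ℝ, |t| ≤ L → ((t, 0) : ℝ × ℝ) ∈ Q)
    (q : ℝ × ℝ) (hq : q ∈ Q) (hqmid : |q.1| ≤ L / 2)
    (u₁ u₂ : ℝ) (hu₂ : 0 < u₂)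
    (hsupp : ∀ x ∈ Q, u₁ * x.1 + u₂ * x.2 ≤ u₁ * q.1 + u₂ * q.2) :
    |u₁| / u₂ ≤ 2 * ε / L := by
  have h1 := hsupp _ (hbase L (by rw [abs_of_pos hL]))
  have h2 := hsupp _ (hbase (-L) (by rw [abs_neg, abs_of_pos hL]))
  simp only at h1 h2
  have habs : |u₁| * L ≤ u₁ * q.1 + u₂ * q.2 := by
    rcases abs_cases u₁ with ⟨h, _⟩ | ⟨h, _⟩ <;> nlinarith
  have hq2 : q.2 ≤ ε := (hQsub hq).2
  have hbound : u₁ * q.1 ≤ |u₁| * (L / 2) := by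
    calc u₁ * q.1 ≤ |u₁ * q.1| := le_abs_self _
      _ = |u₁| * |q.1| := abs_mul _ _
      _ ≤ |u₁| * (L / 2) := by gcongr
  rw [div_le_iff₀ hu₂, div_mul_eq_mul_div, le_div_iff₀ hL]
  nlinarith [mul_le_mul_of_nonneg_left hq2 hu₂.le]
end

section
/- Let k be a positive natural number, let v : Fin k → EuclideanSpace ℝ (Fin 3) be a family of unit vectors, and let δ ∈ (0, π]. Then there exists a unit vector n ∈ EuclideanSpace ℝ (Fin 3) such that the number of indices i with ⟪n, v i⟫ ≥ Real.cos δ is at least k * (1 − Real.cos δ) / 2. -/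
open RealInnerProductSpace

open MeasureTheory Real Set
open scoped ENNReal


lemma euclid2_norm (z : Fin 2 → ℝ) :
    ‖(MeasurableEquiv.toLp 2 (Fin 2 → ℝ)) z‖ = Real.sqrt (z 0 ^ 2 + z 1 ^ 2) := by
  rw [EuclideanSpace.norm_eq, Fin.sum_univ_two]
  norm_num [Real.norm_eq_abs, sq_abs]

lemma disk_vol_closed (β : ℝ) :
    volume {z : Fin 2 → ℝ | z 0 ^ 2 + z 1 ^ 2 ≤ β} = ENNReal.ofReal (π * β) := by
  rcases lt_or_ge β 0 with hβ | hβ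
  · have : {z : Fin 2 → ℝ | z 0 ^ 2 + z 1 ^ 2 ≤ β} = ∅ := by
      ext z; simp only [mem_setOf_eq, mem_empty_iff_false, iff_false]
      nlinarith [sq_nonneg (z 0), sq_nonneg (z 1)]
    rw [this, measure_empty, Eq.comm, ENNReal.ofReal_eq_zero]
    nlinarith [Real.pi_pos]
  · have key : {z : Fin 2 → ℝ | z 0 ^ 2 + z 1 ^ 2 ≤ β} =
        (MeasurableEquiv.toLp 2 (Fin 2 → ℝ)) ⁻¹' (Metric.closedBall 0 (Real.sqrt β)) := by
      ext z
      simp only [mem_setOf_eq, mem_preimage, Metric.mem_closedBall, dist_zero_right,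
        euclid2_norm, Real.sqrt_le_sqrt_iff (Real.sqrt_nonneg β)]
      rw [Real.sqrt_le_sqrt_iff hβ]
    rw [key, MeasurableEquiv.coe_toLp, (PiLp.volume_preserving_toLp (Fin 2)).measure_preimage
        measurableSet_closedBall.nullMeasurableSet,
      EuclideanSpace.volume_closedBall]
    simp only [Fintype.card_fin]
    have h1 : Real.Gamma ((2:ℕ) / 2 + 1) = 1 := by norm_num [Real.Gamma_two]
    rw [h1, div_one, Real.sq_sqrt Real.pi_pos.le, ← ENNReal.ofReal_pow (Real.sqrt_nonneg β),
      Real.sq_sqrt hβ, ← ENNReal.ofReal_mul hβ, mul_comm]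

lemma disk_vol_open (β : ℝ) :
    volume {z : Fin 2 → ℝ | z 0 ^ 2 + z 1 ^ 2 < β} = ENNReal.ofReal (π * β) := by
  rcases le_or_gt β 0 with hβ | hβ
  · have : {z : Fin 2 → ℝ | z 0 ^ 2 + z 1 ^ 2 < β} = ∅ := by
      ext z; simp only [mem_setOf_eq, mem_empty_iff_false, iff_false]
      nlinarith [sq_nonneg (z 0), sq_nonneg (z 1)]
    rw [this, measure_empty, Eq.comm, ENNReal.ofReal_eq_zero]
    nlinarith [Real.pi_pos]
  · have key : {z : Fin 2 → ℝ | z 0 ^ 2 + z 1 ^ 2 < β} =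
        (MeasurableEquiv.toLp 2 (Fin 2 → ℝ)) ⁻¹' (Metric.ball 0 (Real.sqrt β)) := by
      ext z
      simp only [mem_setOf_eq, mem_preimage, Metric.mem_ball, dist_zero_right, euclid2_norm]
      rw [Real.sqrt_lt_sqrt_iff (by positivity)]
    rw [key, MeasurableEquiv.coe_toLp, (PiLp.volume_preserving_toLp (Fin 2)).measure_preimage
        measurableSet_ball.nullMeasurableSet,
      EuclideanSpace.volume_ball]
    simp only [Fintype.card_fin]
    have h1 : Real.Gamma ((2:ℕ) / 2 + 1) = 1 := by norm_num [Real.Gamma_two]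
    rw [h1, div_one, Real.sq_sqrt Real.pi_pos.le, ← ENNReal.ofReal_pow (Real.sqrt_nonneg β),
      Real.sq_sqrt hβ.le, ← ENNReal.ofReal_mul hβ.le, mul_comm]

lemma annulus_vol (α β : ℝ) (hα : 0 ≤ α) (hαβ : α ≤ β) :
    volume {z : Fin 2 → ℝ | α ≤ z 0 ^ 2 + z 1 ^ 2 ∧ z 0 ^ 2 + z 1 ^ 2 ≤ β} =
      ENNReal.ofReal (π * (β - α)) := by
  have hset : {z : Fin 2 → ℝ | α ≤ z 0 ^ 2 + z 1 ^ 2 ∧ z 0 ^ 2 + z 1 ^ 2 ≤ β} =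
      {z : Fin 2 → ℝ | z 0 ^ 2 + z 1 ^ 2 ≤ β} \ {z : Fin 2 → ℝ | z 0 ^ 2 + z 1 ^ 2 < α} := by
    ext z; simp only [mem_setOf_eq, mem_diff, not_lt]; tauto
  have hmeas : MeasurableSet {z : Fin 2 → ℝ | z 0 ^ 2 + z 1 ^ 2 < α} := by
    have : Continuous fun z : Fin 2 → ℝ => z 0 ^ 2 + z 1 ^ 2 := by
      continuity
    exact measurableSet_lt this.measurable measurable_const
  have hsub : {z : Fin 2 → ℝ | z 0 ^ 2 + z 1 ^ 2 < α} ⊆ {z : Fin 2 → ℝ | z 0 ^ 2 + z 1 ^ 2 ≤ β} :=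
    fun z hz => le_trans (le_of_lt hz) hαβ
  rw [hset, measure_diff hsub hmeas.nullMeasurableSet
      (by rw [disk_vol_open]; exact ENNReal.ofReal_lt_top.ne),
    disk_vol_closed, disk_vol_open, ← ENNReal.ofReal_sub _ (by positivity)]
  ring_nf

noncomputable def fArea (c t : ℝ) : ℝ :=
  if 0 ≤ t then
    (if 0 < c then π * max 0 (min (1 - t^2) (t^2*(1-c^2)/c^2)) else π * max 0 (1 - t^2))
  else
    (if c < 0 then π * max 0 ((1 - t^2) - t^2*(1-c^2)/c^2) else 0)


lemma ofReal_pi_max (g : ℝ) : ENNReal.ofReal (π * max 0 g) = ENNReal.ofReal (π * g) := by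
  rcases le_or_gt 0 g with h | h
  · rw [max_eq_right h]
  · rw [max_eq_left h.le, mul_zero, ENNReal.ofReal_zero, Eq.comm, ENNReal.ofReal_eq_zero]
    nlinarith [Real.pi_pos]

lemma slice_vol (c t : ℝ) (hc : -1 ≤ c) :
    volume {z : Fin 2 → ℝ | t^2 + (z 0 ^ 2 + z 1 ^ 2) ≤ 1 ∧
        c * Real.sqrt (t^2 + (z 0 ^ 2 + z 1 ^ 2)) ≤ t} = ENNReal.ofReal (fArea c t) := by
  rcases le_or_gt 0 t with ht | ht
  · rcases lt_or_ge 0 c with hcpos | hcnp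
    · -- c > 0, t ≥ 0 : disk of radius² min(1-t², t²(1-c²)/c²)
      have hkey : ∀ q : ℝ, 0 ≤ q →
          (c * Real.sqrt (t^2 + q) ≤ t ↔ q ≤ t^2*(1-c^2)/c^2) := by
        intro q hq
        rw [← le_div_iff₀' hcpos]
        rw [show t / c = Real.sqrt ((t/c)^2) by rw [Real.sqrt_sq (by positivity)],
          Real.sqrt_le_sqrt_iff (by positivity)]
        have hc2 : (0:ℝ) < c^2 := by positivity
        rw [div_pow, le_div_iff₀ hc2, le_div_iff₀ hc2]
        constructor <;> intro h <;> nlinarith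
      have hset : {z : Fin 2 → ℝ | t^2 + (z 0 ^ 2 + z 1 ^ 2) ≤ 1 ∧
          c * Real.sqrt (t^2 + (z 0 ^ 2 + z 1 ^ 2)) ≤ t} =
          {z : Fin 2 → ℝ | z 0 ^ 2 + z 1 ^ 2 ≤ min (1 - t^2) (t^2*(1-c^2)/c^2)} := by
        ext z
        have hq : (0:ℝ) ≤ z 0 ^ 2 + z 1 ^ 2 := by positivity
        simp only [mem_setOf_eq, le_min_iff, hkey _ hq]
        constructor <;> intro h <;> exact ⟨by linarith [h.1], h.2⟩
      rw [hset, disk_vol_closed, fArea, if_pos ht, if_pos hcpos, ofReal_pi_max]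
    · -- c ≤ 0, t ≥ 0 : full disk
      have hset : {z : Fin 2 → ℝ | t^2 + (z 0 ^ 2 + z 1 ^ 2) ≤ 1 ∧
          c * Real.sqrt (t^2 + (z 0 ^ 2 + z 1 ^ 2)) ≤ t} =
          {z : Fin 2 → ℝ | z 0 ^ 2 + z 1 ^ 2 ≤ 1 - t^2} := by
        ext z
        have hq : (0:ℝ) ≤ z 0 ^ 2 + z 1 ^ 2 := by positivity
        simp only [mem_setOf_eq]
        constructor
        · intro h; linarith [h.1]
        · intro h
          refine ⟨by linarith, le_trans (mul_nonpos_iff.mpr (Or.inr ⟨hcnp, Real.sqrt_nonneg _⟩)) ht⟩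
      rw [hset, disk_vol_closed, fArea, if_pos ht, if_neg (not_lt.mpr hcnp), ofReal_pi_max]
  · rcases lt_or_ge c 0 with hcneg | hcnn
    · -- c < 0, t < 0 : annulus q ∈ [D, 1-t²], D = t²(1-c²)/c²
      set D := t^2*(1-c^2)/c^2 with hD
      have hD0 : 0 ≤ D := by
        have h1 : (0:ℝ) ≤ 1 - c^2 := by nlinarith
        positivity
      have hkey : ∀ q : ℝ, 0 ≤ q →
          (c * Real.sqrt (t^2 + q) ≤ t ↔ D ≤ q) := by
        intro q hq
        have hc2 : (0:ℝ) < c^2 := by nlinarith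
        have htc : 0 ≤ t / c := div_nonneg_iff.mpr (Or.inr ⟨ht.le, hcneg.le⟩)
        rw [show c * Real.sqrt (t^2+q) ≤ t ↔ t / c ≤ Real.sqrt (t^2+q) by
            rw [div_le_iff_of_neg hcneg, mul_comm],
          show t / c = Real.sqrt ((t/c)^2) by rw [Real.sqrt_sq htc],
          Real.sqrt_le_sqrt_iff (by positivity), div_pow, div_le_iff₀ hc2, hD,
          div_le_iff₀ hc2]
        constructor <;> intro h <;> nlinarith
      have hset : {z : Fin 2 → ℝ | t^2 + (z 0 ^ 2 + z 1 ^ 2) ≤ 1 ∧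
          c * Real.sqrt (t^2 + (z 0 ^ 2 + z 1 ^ 2)) ≤ t} =
          {z : Fin 2 → ℝ | D ≤ z 0 ^ 2 + z 1 ^ 2 ∧ z 0 ^ 2 + z 1 ^ 2 ≤ 1 - t^2} := by
        ext z
        have hq : (0:ℝ) ≤ z 0 ^ 2 + z 1 ^ 2 := by positivity
        simp only [mem_setOf_eq, hkey _ hq]
        constructor <;> intro h <;> exact ⟨by linarith [h.1, h.2], by linarith [h.1, h.2]⟩
      rw [hset, fArea, if_neg (not_le.mpr ht), if_pos hcneg, ofReal_pi_max]
      rcases le_or_gt D (1 - t^2) with hle | hlt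
      · rw [annulus_vol D _ hD0 hle]
      · have : {z : Fin 2 → ℝ | D ≤ z 0 ^ 2 + z 1 ^ 2 ∧ z 0 ^ 2 + z 1 ^ 2 ≤ 1 - t^2} = ∅ := by
          ext z; simp only [mem_setOf_eq, mem_empty_iff_false, iff_false, not_and, not_le]
          intro h; linarith
        rw [this, measure_empty, Eq.comm, ENNReal.ofReal_eq_zero]
        nlinarith [Real.pi_pos]
    · -- c ≥ 0, t < 0 : empty
      have hset : {z : Fin 2 → ℝ | t^2 + (z 0 ^ 2 + z 1 ^ 2) ≤ 1 ∧
          c * Real.sqrt (t^2 + (z 0 ^ 2 + z 1 ^ 2)) ≤ t} = ∅ := by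
        ext z
        simp only [mem_setOf_eq, mem_empty_iff_false, iff_false, not_and, not_le]
        intro _
        exact lt_of_lt_of_le ht (by positivity)
      rw [hset, measure_empty, fArea, if_neg (not_le.mpr ht), if_neg (not_lt.mpr hcnn),
        ENNReal.ofReal_zero]

lemma fArea_nonneg (c t : ℝ) : 0 ≤ fArea c t := by
  unfold fArea
  have := Real.pi_pos
  split_ifs <;> positivity

lemma fArea_le (c t : ℝ) : fArea c t ≤ π := by
  have hπ := Real.pi_pos
  unfold fArea
  split_ifs with h1 h2 h3
  · have : max 0 (min (1 - t^2) (t^2*(1-c^2)/c^2)) ≤ 1 := by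
      apply max_le (by norm_num)
      exact le_trans (min_le_left _ _) (by nlinarith)
    nlinarith
  · have : max 0 (1 - t^2) ≤ 1 := max_le (by norm_num) (by nlinarith)
    nlinarith
  · have hc2 : (0:ℝ) < c^2 := by nlinarith
    have hc0 : c ≠ 0 := h3.ne
    have heq : (1 - t^2) - t^2*(1-c^2)/c^2 = 1 - t^2/c^2 := by field_simp; ring
    have hd : (0:ℝ) ≤ t^2/c^2 := by positivity
    have : max 0 ((1 - t^2) - t^2*(1-c^2)/c^2) ≤ 1 := by
      rw [heq]; exact max_le (by norm_num) (by linarith)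
    nlinarith
  · linarith

lemma fArea_measurable (c : ℝ) : Measurable (fArea c) := by
  unfold fArea
  rcases lt_or_ge 0 c with h | h
  · simp only [if_pos h, if_neg (not_lt.mpr h.le)]
    apply Measurable.ite measurableSet_Ici
    · fun_prop
    · exact measurable_const
  · simp only [if_neg (not_lt.mpr h)]
    rcases lt_or_ge c 0 with h2 | h2
    · simp only [if_pos h2]
      apply Measurable.ite measurableSet_Ici <;> fun_prop
    · simp only [if_neg (not_lt.mpr h2)]
      apply Measurable.ite measurableSet_Ici
      · fun_prop
      · exact measurable_const

lemma fArea_zero_outside (c t : ℝ) (hc : -1 ≤ c) (hc1 : c ≤ 1) (ht : t ∉ Icc (-1:ℝ) 1) :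
    fArea c t = 0 := by
  simp only [mem_Icc, not_and_or, not_le] at ht
  unfold fArea
  rcases ht with ht | ht
  · -- t < -1
    rw [if_neg (not_le.mpr (by linarith))]
    rcases lt_or_ge c 0 with h | h
    · rw [if_pos h]
      have hc2 : (0:ℝ) < c^2 := by nlinarith
      have hc0 : c ≠ 0 := h.ne
      have heq : (1 - t^2) - t^2*(1-c^2)/c^2 = 1 - t^2/c^2 := by field_simp; ring
      have : t^2/c^2 ≥ 1 := by
        rw [ge_iff_le, le_div_iff₀ hc2]; nlinarith
      rw [heq, max_eq_left (by linarith), mul_zero]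
    · rw [if_neg (not_lt.mpr h)]
  · -- 1 < t
    rw [if_pos (by linarith)]
    rcases lt_or_ge 0 c with h | h
    · rw [if_pos h, max_eq_left, mul_zero]
      exact le_trans (min_le_left _ _) (by nlinarith)
    · rw [if_neg (not_lt.mpr h), max_eq_left (by nlinarith), mul_zero]

lemma fArea_support (c : ℝ) (hc : -1 ≤ c) (hc1 : c ≤ 1) :
    Function.support (fArea c) ⊆ Icc (-1:ℝ) 1 := by
  intro t ht
  by_contra h
  exact ht (fArea_zero_outside c t hc hc1 h)

lemma fArea_integrable (c : ℝ) (hc : -1 ≤ c) (hc1 : c ≤ 1) : Integrable (fArea c) := by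
  rw [← Set.indicator_eq_self.mpr (fArea_support c hc hc1)]
  rw [integrable_indicator_iff measurableSet_Icc]
  apply Measure.integrableOn_of_bounded (M := π)
  · rw [Real.volume_Icc]; exact ENNReal.ofReal_lt_top.ne
  · exact (fArea_measurable c).aestronglyMeasurable
  · refine ae_of_all _ fun t => ?_
    rw [Real.norm_eq_abs, abs_of_nonneg (fArea_nonneg c t)]
    exact fArea_le c t

lemma poly_int (a b A B : ℝ) :
    ∫ t in a..b, (A + B * t^2) = A*(b-a) + B*(b^3-a^3)/3 := by
  rw [intervalIntegral.integral_add intervalIntegrable_const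
    ((intervalIntegral.intervalIntegrable_pow 2).const_mul B),
    intervalIntegral.integral_const_mul, integral_pow, intervalIntegral.integral_const]
  push_cast
  rw [smul_eq_mul]
  ring

lemma fArea_integral (c : ℝ) (hc : -1 ≤ c) (hc1 : c < 1) :
    ∫⁻ t, ENNReal.ofReal (fArea c t) = ENNReal.ofReal (2*π/3*(1-c)) := by
  rw [← ofReal_integral_eq_lintegral_ofReal (fArea_integrable c hc hc1.le)
    (ae_of_all _ (fArea_nonneg c))]
  congr 1
  have hItoI : ∫ t, fArea c t = ∫ t in (-1:ℝ)..1, fArea c t := by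
    conv_lhs => rw [← indicator_eq_self.mpr (fArea_support c hc hc1.le)]
    rw [integral_indicator measurableSet_Icc, integral_Icc_eq_integral_Ioc,
      ← intervalIntegral.integral_of_le (by norm_num : (-1:ℝ) ≤ 1)]
  rw [hItoI]
  have hII : ∀ a b : ℝ, IntervalIntegrable (fArea c) volume a b :=
    fun a b => (fArea_integrable c hc hc1.le).intervalIntegrable
  rcases lt_trichotomy c 0 with hcneg | hczero | hcpos
  · -- c < 0 : split at c and 0
    rw [← intervalIntegral.integral_add_adjacent_intervals (hII (-1) c) (hII c 1),
      ← intervalIntegral.integral_add_adjacent_intervals (hII c 0) (hII 0 1)]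
    have hc2 : (0:ℝ) < c^2 := by nlinarith
    have hc0 : c ≠ 0 := hcneg.ne
    have p1 : ∫ t in (-1:ℝ)..c, fArea c t = ∫ t in (-1:ℝ)..c, ((0:ℝ) + 0*t^2) := by
      apply intervalIntegral.integral_congr
      intro t ht
      rw [uIcc_of_le (by linarith)] at ht
      have ht2 : t < 0 := lt_of_le_of_lt ht.2 hcneg
      have heq : (1 - t^2) - t^2*(1-c^2)/c^2 = 1 - t^2/c^2 := by field_simp; ring
      have htc : t^2/c^2 ≥ 1 := by
        rw [ge_iff_le, le_div_iff₀ hc2]; nlinarith [ht.2]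
      simp only [fArea, if_neg (not_le.mpr ht2), if_pos hcneg, heq,
        max_eq_left (by linarith : (1:ℝ) - t^2/c^2 ≤ 0), mul_zero, zero_mul, add_zero]
    have p2 : ∫ t in c..(0:ℝ), fArea c t = ∫ t in c..(0:ℝ), (π + (-(π/c^2))*t^2) := by
      apply intervalIntegral.integral_congr
      intro t ht
      rw [uIcc_of_le hcneg.le] at ht
      have heq : (1 - t^2) - t^2*(1-c^2)/c^2 = 1 - t^2/c^2 := by field_simp; ring
      have hmax : max 0 (1 - t^2/c^2) = 1 - t^2/c^2 := by
        apply max_eq_right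
        rw [sub_nonneg, div_le_one hc2]; nlinarith [ht.1, ht.2]
      rcases le_or_gt 0 t with h0 | h0
      · have ht0 : t = 0 := le_antisymm ht.2 h0
        simp only [fArea, if_pos h0, if_neg (not_lt.mpr hcneg.le), ht0]
        norm_num
      · simp only [fArea, if_neg (not_le.mpr h0), if_pos hcneg, heq, hmax]
        field_simp
        ring
    have p3 : ∫ t in (0:ℝ)..1, fArea c t = ∫ t in (0:ℝ)..1, (π + (-π)*t^2) := by
      apply intervalIntegral.integral_congr
      intro t ht
      rw [uIcc_of_le (by norm_num)] at ht
      simp only [fArea, if_pos ht.1, if_neg (not_lt.mpr hcneg.le),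
        max_eq_right (by nlinarith [ht.1, ht.2] : (0:ℝ) ≤ 1 - t^2)]
      ring
    rw [p1, p2, p3, poly_int, poly_int, poly_int]
    field_simp
    ring
  · -- c = 0 : split at 0
    subst hczero
    rw [← intervalIntegral.integral_add_adjacent_intervals (hII (-1) 0) (hII 0 1)]
    have p1 : ∫ t in (-1:ℝ)..0, fArea 0 t = ∫ t in (-1:ℝ)..0, ((0:ℝ) + 0*t^2) := by
      apply intervalIntegral.integral_congr_ae
      have h0 : ∀ᵐ t : ℝ, t ≠ 0 := by
        have hs : {a : ℝ | ¬ a ≠ 0} = {0} := by ext a; simp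
        rw [MeasureTheory.ae_iff, hs]
        exact measure_singleton 0
      filter_upwards [h0] with t ht0 htm
      rw [uIoc_of_le (by norm_num : (-1:ℝ) ≤ 0)] at htm
      have : t < 0 := lt_of_le_of_ne htm.2 ht0
      simp only [fArea, if_neg (not_le.mpr this)]
      norm_num
    have p3 : ∫ t in (0:ℝ)..1, fArea 0 t = ∫ t in (0:ℝ)..1, (π + (-π)*t^2) := by
      apply intervalIntegral.integral_congr
      intro t ht
      rw [uIcc_of_le (by norm_num)] at ht
      simp only [fArea, if_pos ht.1]
      rw [if_neg (lt_irrefl 0), max_eq_right (by nlinarith [ht.1, ht.2] : (0:ℝ) ≤ 1 - t^2)]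
      ring
    rw [p1, p3, poly_int, poly_int]
    ring
  · -- c > 0 : split at 0 and c
    rw [← intervalIntegral.integral_add_adjacent_intervals (hII (-1) 0) (hII 0 1),
      ← intervalIntegral.integral_add_adjacent_intervals (hII 0 c) (hII c 1)]
    have hc2 : (0:ℝ) < c^2 := by positivity
    have p1 : ∫ t in (-1:ℝ)..0, fArea c t = ∫ t in (-1:ℝ)..0, ((0:ℝ) + 0*t^2) := by
      apply intervalIntegral.integral_congr
      intro t ht
      rw [uIcc_of_le (by norm_num)] at ht
      rcases le_or_gt 0 t with h0 | h0
      · have ht0 : t = 0 := le_antisymm ht.2 h0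
        simp only [fArea, if_pos h0, if_pos hcpos, ht0]
        norm_num
      · simp only [fArea, if_neg (not_le.mpr h0), if_neg (not_lt.mpr hcpos.le)]
        norm_num
    have p2 : ∫ t in (0:ℝ)..c, fArea c t = ∫ t in (0:ℝ)..c, ((0:ℝ) + (π*(1-c^2)/c^2)*t^2) := by
      apply intervalIntegral.integral_congr
      intro t ht
      rw [uIcc_of_le hcpos.le] at ht
      have hmin : min (1 - t^2) (t^2*(1-c^2)/c^2) = t^2*(1-c^2)/c^2 := by
        apply min_eq_right
        rw [div_le_iff₀ hc2]; nlinarith [ht.1, ht.2]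
      have hD : (0:ℝ) ≤ t^2*(1-c^2)/c^2 := by
        have h1 : (0:ℝ) ≤ 1 - c^2 := by nlinarith
        positivity
      simp only [fArea, if_pos ht.1, if_pos hcpos, hmin, max_eq_right hD]
      ring
    have p3 : ∫ t in c..(1:ℝ), fArea c t = ∫ t in c..(1:ℝ), (π + (-π)*t^2) := by
      apply intervalIntegral.integral_congr
      intro t ht
      rw [uIcc_of_le hc1.le] at ht
      have ht0 : 0 ≤ t := le_trans hcpos.le ht.1
      have hmin : min (1 - t^2) (t^2*(1-c^2)/c^2) = 1 - t^2 := by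
        apply min_eq_left
        rw [le_div_iff₀ hc2]; nlinarith [ht.1, ht.2]
      simp only [fArea, if_pos ht0, if_pos hcpos, hmin,
        max_eq_right (by nlinarith [ht.1, ht.2] : (0:ℝ) ≤ 1 - t^2)]
      ring
    rw [p1, p2, p3, poly_int, poly_int, poly_int]
    field_simp
    ring

section Cone

local notation "E3" => EuclideanSpace ℝ (Fin 3)

lemma cone_vol_e (c : ℝ) (hc : -1 ≤ c) (hc1 : c < 1) :
    volume {y : E3 | ‖y‖ ≤ 1 ∧ c * ‖y‖ ≤ y 0} = ENNReal.ofReal (2*π/3*(1-c)) := by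
  classical
  -- the prod-space set
  set T : Set (ℝ × (Fin 2 → ℝ)) := {p : ℝ × (Fin 2 → ℝ) |
      p.1^2 + (p.2 0 ^ 2 + p.2 1 ^ 2) ≤ 1 ∧
      c * Real.sqrt (p.1^2 + (p.2 0 ^ 2 + p.2 1 ^ 2)) ≤ p.1} with hT
  have hTmeas : MeasurableSet T := by
    apply IsClosed.measurableSet
    have c1 : Continuous fun p : ℝ × (Fin 2 → ℝ) => p.1^2 + (p.2 0 ^ 2 + p.2 1 ^ 2) := by
      fun_prop
    exact IsClosed.inter (isClosed_le c1 continuous_const)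
      (isClosed_le (by fun_prop) continuous_fst)
  -- pi-space set
  set S : Set (Fin 3 → ℝ) := {y : Fin 3 → ℝ |
      (y 0 ^ 2 + (y 1 ^ 2 + y 2 ^ 2) ≤ 1) ∧
      c * Real.sqrt (y 0 ^ 2 + (y 1 ^ 2 + y 2 ^ 2)) ≤ y 0} with hS
  -- step 1: euclidean set is preimage of S
  have hpre : {y : E3 | ‖y‖ ≤ 1 ∧ c * ‖y‖ ≤ y 0} =
      (MeasurableEquiv.toLp 2 (Fin 3 → ℝ)).symm ⁻¹' S := by
    ext y
    have hnorm : ‖y‖ = Real.sqrt (y 0 ^ 2 + (y 1 ^ 2 + y 2 ^ 2)) := by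
      rw [EuclideanSpace.norm_eq, Fin.sum_univ_three]
      norm_num [Real.norm_eq_abs, sq_abs, add_assoc]
    have hsum : (0:ℝ) ≤ y 0 ^ 2 + (y 1 ^ 2 + y 2 ^ 2) := by positivity
    simp only [mem_setOf_eq, mem_preimage, hS, hnorm]
    have h1 : Real.sqrt (y 0 ^ 2 + (y 1 ^ 2 + y 2 ^ 2)) ≤ 1 ↔
        y 0 ^ 2 + (y 1 ^ 2 + y 2 ^ 2) ≤ 1 := by
      rw [show (1:ℝ) = Real.sqrt 1 by rw [Real.sqrt_one], Real.sqrt_le_sqrt_iff (by norm_num),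
        Real.sqrt_one]
    rw [h1]
    rfl
  have hSmeas : MeasurableSet S := by
    apply IsClosed.measurableSet
    rw [hS, setOf_and]
    have c1 : Continuous fun y : Fin 3 → ℝ => y 0 ^ 2 + (y 1 ^ 2 + y 2 ^ 2) := by fun_prop
    exact IsClosed.inter (isClosed_le c1 continuous_const)
      (isClosed_le (by continuity) (continuous_apply 0))
  rw [hpre, (EuclideanSpace.volume_preserving_symm_measurableEquiv_toLp (Fin 3)).measure_preimage
      hSmeas.nullMeasurableSet]
  -- step 2: S is preimage of T under piFinSuccAbove
  have hpre2 : S = (MeasurableEquiv.piFinSuccAbove (fun _ : Fin 3 => ℝ) 0) ⁻¹' T := by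
    ext y
    simp only [hS, hT, mem_setOf_eq, mem_preimage,
      MeasurableEquiv.piFinSuccAbove_apply, Fin.insertNthEquiv, Equiv.coe_fn_symm_mk,
      Fin.removeNth]
    have h0 : (0:Fin 3).succAbove (0:Fin 2) = 1 := rfl
    have h1 : (0:Fin 3).succAbove (1:Fin 2) = 2 := rfl
    rw [h0, h1]
  rw [hpre2, volume_pi,
    (measurePreserving_piFinSuccAbove (fun _ : Fin 3 => (volume : Measure ℝ)) 0).measure_preimage
      hTmeas.nullMeasurableSet]
  have hvol2 : (Measure.pi fun _ : Fin 2 => (volume : Measure ℝ)) = volume := volume_pi.symm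
  rw [show (Measure.pi fun j : Fin 2 => ((fun _ : Fin 3 => (volume : Measure ℝ))
      ((0:Fin 3).succAbove j))) = (volume : Measure (Fin 2 → ℝ)) from volume_pi.symm]
  rw [Measure.prod_apply hTmeas]
  have hslice : ∀ t : ℝ, (volume : Measure (Fin 2 → ℝ)) (Prod.mk t ⁻¹' T) =
      ENNReal.ofReal (fArea c t) := by
    intro t
    have : Prod.mk t ⁻¹' T = {z : Fin 2 → ℝ | t^2 + (z 0 ^ 2 + z 1 ^ 2) ≤ 1 ∧
        c * Real.sqrt (t^2 + (z 0 ^ 2 + z 1 ^ 2)) ≤ t} := rfl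
    rw [this, slice_vol c t hc]
  simp only [hslice]
  exact fArea_integral c hc hc1

lemma cone_vol (c : ℝ) (hc : -1 ≤ c) (hc1 : c < 1) (u : E3) (hu : ‖u‖ = 1) :
    volume {x : E3 | ‖x‖ ≤ 1 ∧ c * ‖x‖ ≤ ⟪u, x⟫} = ENNReal.ofReal (2*π/3*(1-c)) := by
  classical
  set e : E3 := EuclideanSpace.single 0 (1:ℝ) with he
  have hue : ‖u‖ = ‖e‖ := by
    rw [hu, he, EuclideanSpace.norm_single]
    norm_num
  set R : E3 ≃ₗᵢ[ℝ] E3 := Submodule.reflection (ℝ ∙ (u - e))ᗮ with hR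
  have hRu : R u = e := Submodule.reflection_sub hue
  have hmeasD : MeasurableSet {y : E3 | ‖y‖ ≤ 1 ∧ c * ‖y‖ ≤ y 0} := by
    apply IsClosed.measurableSet
    rw [setOf_and]
    exact IsClosed.inter (isClosed_le continuous_norm continuous_const)
      (isClosed_le (continuous_const.mul continuous_norm)
        (EuclideanSpace.proj (0 : Fin 3) : E3 →L[ℝ] ℝ).continuous)
  have hset : {x : E3 | ‖x‖ ≤ 1 ∧ c * ‖x‖ ≤ ⟪u, x⟫} =
      R ⁻¹' {y : E3 | ‖y‖ ≤ 1 ∧ c * ‖y‖ ≤ y 0} := by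
    ext x
    simp only [mem_setOf_eq, mem_preimage]
    have h1 : ‖R x‖ = ‖x‖ := R.norm_map x
    have h2 : (R x) 0 = ⟪u, x⟫ := by
      have h3 : (R x) 0 = ⟪e, R x⟫ := by
        rw [he, EuclideanSpace.inner_single_left]
        simp
      rw [h3, ← hRu, R.inner_map_map]
    rw [h1, h2]
  rw [hset, (R.measurePreserving).measure_preimage hmeasD.nullMeasurableSet]
  exact cone_vol_e c hc hc1


lemma gamma52 : Real.Gamma ((3:ℕ)/2 + 1) = 3/4 * Real.sqrt π := by
  rw [show ((3:ℕ):ℝ)/2 + 1 = 3/2 + 1 by norm_num, Real.Gamma_add_one (by norm_num),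
    show (3:ℝ)/2 = 1/2 + 1 by norm_num, Real.Gamma_add_one (by norm_num),
    Real.Gamma_one_half_eq]
  ring

lemma ball_vol : volume (Metric.closedBall (0:E3) 1) = ENNReal.ofReal (4*π/3) := by
  rw [EuclideanSpace.volume_closedBall]
  simp only [Fintype.card_fin, ENNReal.ofReal_one, one_pow, one_mul]
  congr 1
  rw [gamma52]
  have hs : Real.sqrt π > 0 := Real.sqrt_pos.mpr Real.pi_pos
  have h3 : Real.sqrt π ^ 3 = π * Real.sqrt π := by
    rw [pow_succ, Real.sq_sqrt Real.pi_pos.le]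
  rw [h3]
  field_simp

/-- Averaging step: some direction `n` is within angle `δ` of at least a
`(1 - cos δ)/2` fraction of the given unit vectors. -/
theorem stmt_7 (k : ℕ) (hk : 0 < k) (v : Fin k → EuclideanSpace ℝ (Fin 3))
    (hv : ∀ i, ‖v i‖ = 1) (δ : ℝ) (hδ : δ ∈ Set.Ioc (0 : ℝ) Real.pi) :
    ∃ n : EuclideanSpace ℝ (Fin 3), ‖n‖ = 1 ∧
      (({i : Fin k | ⟪n, v i⟫ ≥ Real.cos δ}.ncard : ℝ)) ≥
        (k : ℝ) * (1 - Real.cos δ) / 2 := by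
  classical
  set c : ℝ := Real.cos δ with hcdef
  have hc : -1 ≤ c := Real.neg_one_le_cos δ
  have hc1 : c < 1 := by
    have h := Real.cos_lt_cos_of_nonneg_of_le_pi (le_refl 0) hδ.2 hδ.1
    rwa [Real.cos_zero] at h
  by_contra hcon
  push_neg at hcon
  set r : ℝ := (k : ℝ) * (1 - c) / 2 with hrdef
  have hr0 : 0 < r := by
    have : (0:ℝ) < (k:ℝ) := by exact_mod_cast hk
    rw [hrdef]; nlinarith
  set M : ℕ := ⌈r⌉₊ - 1 with hMdef
  have hM1 : 1 ≤ ⌈r⌉₊ := Nat.one_le_ceil_iff.mpr hr0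
  have hMcast : (M:ℝ) = (⌈r⌉₊ : ℝ) - 1 := by
    rw [hMdef]; push_cast [hM1]; ring
  have hMlt : (M:ℝ) < r := by
    rw [hMcast]
    have := Nat.ceil_lt_add_one hr0.le
    linarith
  -- every nonzero x has few good directions
  have hcount : ∀ x : EuclideanSpace ℝ (Fin 3), x ≠ 0 →
      {i : Fin k | c * ‖x‖ ≤ ⟪v i, x⟫}.ncard ≤ M := by
    intro x hx
    have hnx : 0 < ‖x‖ := norm_pos_iff.mpr hx
    set n : EuclideanSpace ℝ (Fin 3) := ‖x‖⁻¹ • x with hn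
    have hn1 : ‖n‖ = 1 := by
      rw [hn, norm_smul, norm_inv, norm_norm, inv_mul_cancel₀ hnx.ne']
    have hseteq : {i : Fin k | ⟪n, v i⟫ ≥ c} = {i : Fin k | c * ‖x‖ ≤ ⟪v i, x⟫} := by
      ext i
      simp only [Set.mem_setOf_eq, ge_iff_le, hn]
      rw [real_inner_smul_left, real_inner_comm]
      rw [le_inv_mul_iff₀ hnx, mul_comm]
    have hlt := hcon n hn1
    rw [hseteq] at hlt
    have hlt2 : ({i : Fin k | c * ‖x‖ ≤ ⟪v i, x⟫}.ncard : ℝ) < r := lt_of_not_ge hlt.not_ge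
    have : {i : Fin k | c * ‖x‖ ≤ ⟪v i, x⟫}.ncard < ⌈r⌉₊ := by
      by_contra hge
      push_neg at hge
      exact absurd (le_trans (Nat.le_ceil r) (by exact_mod_cast hge)) (not_le.mpr hlt2)
    omega
  -- the cone sets
  set S : Fin k → Set (EuclideanSpace ℝ (Fin 3)) :=
    fun i => {x | ‖x‖ ≤ 1 ∧ c * ‖x‖ ≤ ⟪v i, x⟫} with hSdef
  have hSm : ∀ i, MeasurableSet (S i) := by
    intro i
    apply IsClosed.measurableSet
    simp only [hSdef]
    rw [Set.setOf_and]
    exact IsClosed.inter (isClosed_le continuous_norm continuous_const)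
      (isClosed_le (continuous_const.mul continuous_norm)
        (continuous_const.inner continuous_id))
  have hSvol : ∀ i, volume (S i) = ENNReal.ofReal (2*π/3*(1-c)) :=
    fun i => cone_vol c hc hc1 (v i) (hv i)
  set B : Set (EuclideanSpace ℝ (Fin 3)) := Metric.closedBall 0 1 with hBdef
  have hSB : ∀ i, S i ⊆ B := by
    intro i x hx
    rw [hBdef, Metric.mem_closedBall, dist_zero_right]
    exact hx.1
  -- counting function bound a.e.
  have haecount : ∀ᵐ x ∂(volume.restrict B),
      (∑ i : Fin k, (S i).indicator (fun _ => (1:ℝ≥0∞)) x) ≤ (M : ℝ≥0∞) := by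
    have hz : ∀ᵐ x : EuclideanSpace ℝ (Fin 3) ∂(volume.restrict B), x ≠ 0 := by
      apply ae_restrict_of_ae
      have hs : {x : EuclideanSpace ℝ (Fin 3) | ¬ x ≠ 0} = {0} := by ext a; simp
      rw [MeasureTheory.ae_iff, hs]
      exact measure_singleton 0
    filter_upwards [hz] with x hx
    have hsum : (∑ i : Fin k, (S i).indicator (fun _ => (1:ℝ≥0∞)) x) =
        ((Finset.univ.filter (fun i : Fin k => x ∈ S i)).card : ℝ≥0∞) := by
      rw [← Finset.sum_boole]
      congr 1
      ext i
      by_cases h : x ∈ S i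
      · simp [Set.indicator_of_mem h, h]
      · simp [Set.indicator_of_notMem h, h]
    rw [hsum]
    have hsub : (Finset.univ.filter (fun i : Fin k => x ∈ S i)) ⊆
        (Finset.univ.filter (fun i : Fin k => c * ‖x‖ ≤ ⟪v i, x⟫)) := by
      intro i hi
      simp only [Finset.mem_filter, Finset.mem_univ, true_and] at *
      exact hi.2
    have hcard : (Finset.univ.filter (fun i : Fin k => c * ‖x‖ ≤ ⟪v i, x⟫)).card =
        {i : Fin k | c * ‖x‖ ≤ ⟪v i, x⟫}.ncard := by
      rw [Set.ncard_eq_toFinset_card', Set.toFinset_setOf]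
    have : (Finset.univ.filter (fun i : Fin k => x ∈ S i)).card ≤ M :=
      le_trans (Finset.card_le_card hsub) (hcard ▸ hcount x hx)
    exact_mod_cast Nat.cast_le.mpr this
  -- the key inequality
  have hBvol : volume B = ENNReal.ofReal (4*π/3) := ball_vol
  have key : (∑ i : Fin k, volume (S i)) ≤ (M : ℝ≥0∞) * volume B := by
    have h1 : ∀ i : Fin k, volume (S i) =
        ∫⁻ x in B, (S i).indicator (fun _ => (1:ℝ≥0∞)) x ∂volume := by
      intro i
      rw [lintegral_indicator (hSm i), Measure.restrict_restrict (hSm i),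
        setLIntegral_one, Set.inter_eq_left.mpr (hSB i)]
    calc (∑ i : Fin k, volume (S i))
        = ∑ i : Fin k, ∫⁻ x in B, (S i).indicator (fun _ => (1:ℝ≥0∞)) x ∂volume := by
          exact Finset.sum_congr rfl fun i _ => h1 i
      _ = ∫⁻ x in B, (∑ i : Fin k, (S i).indicator (fun _ => (1:ℝ≥0∞)) x) ∂volume := by
          rw [lintegral_finset_sum]
          intro i _
          exact (measurable_const.indicator (hSm i))
      _ ≤ ∫⁻ _ in B, (M : ℝ≥0∞) ∂volume := lintegral_mono_ae haecount
      _ = (M : ℝ≥0∞) * volume B := by rw [setLIntegral_const]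
  have hsum : (∑ i : Fin k, volume (S i)) = (k : ℝ≥0∞) * ENNReal.ofReal (2*π/3*(1-c)) := by
    simp [hSvol, Finset.sum_const, Finset.card_univ]
  rw [hsum, hBvol] at key
  have hfin : ((k:ℝ≥0∞) * ENNReal.ofReal (2*π/3*(1-c))) =
      ENNReal.ofReal ((k:ℝ) * (2*π/3*(1-c))) := by
    rw [← ENNReal.ofReal_natCast k]
    exact (ENNReal.ofReal_mul (by positivity)).symm
  have hfin2 : ((M:ℝ≥0∞) * ENNReal.ofReal (4*π/3)) =
      ENNReal.ofReal ((M:ℝ) * (4*π/3)) := by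
    rw [← ENNReal.ofReal_natCast M]
    exact (ENNReal.ofReal_mul (by positivity)).symm
  rw [hfin, hfin2] at key
  have hreal : (k:ℝ) * (2*π/3*(1-c)) ≤ (M:ℝ) * (4*π/3) := by
    exact (ENNReal.ofReal_le_ofReal_iff (by positivity : (0:ℝ) ≤ (M:ℝ) * (4*π/3))).mp key
  have hπ := Real.pi_pos
  have hkpos : (0:ℝ) < (k:ℝ) := by exact_mod_cast hk
  -- M < r = k(1-c)/2, so M*(4π/3) < k(1-c)/2*(4π/3) = k*(2π/3*(1-c))
  nlinarith [hMlt, hr0]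

end Cone
end

section
/- Let K be a closed convex subset of EuclideanSpace ℝ (Fin 3), let c ∈ EuclideanSpace ℝ (Fin 3) and let n be a unit vector. Assume Metric.closedBall c 1 ⊆ K and that for every x ∈ K, ⟪n, x⟫ ≤ ⟪n, c⟫ + 1 (so the point c + n is a highest point of K in direction n, and the inscribed unit ball is tangent to the supporting plane there). Then for every ε ∈ (0, 1], MeasureTheory.volume (K ∩ {x | ⟪n, x − c⟫ ≥ 1 − ε}) ≥ ENNReal.ofReal (π * ε^2 / 3). -/
open RealInnerProductSpace MeasureTheory

/-- Cone-volume estimate (Case B): if a closed convex set `K` contains a unit ball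
tangent to its top supporting plane in direction `n`, then the slab of `K` of width `ε`
below that plane has volume at least `π ε² / 3`. -/
theorem stmt_11 (K : Set (EuclideanSpace ℝ (Fin 3))) (hKcl : IsClosed K)
    (hKconv : Convex ℝ K) (c : EuclideanSpace ℝ (Fin 3))
    (n : EuclideanSpace ℝ (Fin 3)) (hn : ‖n‖ = 1)
    (hball : Metric.closedBall c 1 ⊆ K)
    (htop : ∀ x ∈ K, ⟪n, x⟫ ≤ ⟪n, c⟫ + 1)
    (ε : ℝ) (hε : ε ∈ Set.Ioc (0 : ℝ) 1) :
    volume (K ∩ {x | ⟪n, x - c⟫ ≥ 1 - ε}) ≥ ENNReal.ofReal (Real.pi * ε ^ 2 / 3) := by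
  obtain ⟨hε0, hε1⟩ := hε
  set a : ℝ := 1 - ε with ha
  set b : ℝ := 1 - (2/5) * ε with hb
  set R : ℝ := 1 - b ^ 2 with hR
  have ha0 : 0 ≤ a := by simp [ha]; linarith
  have hab : a ≤ b := by simp [ha, hb]; nlinarith
  have hb1 : b ≤ 1 := by simp [hb]; nlinarith
  have hR0 : 0 ≤ R := by nlinarith
  -- the unit vector u = e₂
  set u : EuclideanSpace ℝ (Fin 3) := EuclideanSpace.single 2 1 with hu
  have hnu : ‖u‖ = ‖n‖ := by rw [hn, hu, EuclideanSpace.norm_single]; simp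
  set f : EuclideanSpace ℝ (Fin 3) ≃ₗᵢ[ℝ] EuclideanSpace ℝ (Fin 3) :=
    Submodule.reflection (ℝ ∙ (u - n))ᗮ with hf
  have hfu : f u = n := Submodule.reflection_sub hnu
  -- the cylinder in coordinates
  set T : Set (EuclideanSpace ℝ (Fin 3)) :=
    {x | (x 0) ^ 2 + (x 1) ^ 2 ≤ R ∧ x 2 ∈ Set.Icc a b} with hT
  -- the map h : y ↦ f.symm (y - c); h ⁻¹' T ⊆ K ∩ slab
  set h : EuclideanSpace ℝ (Fin 3) → EuclideanSpace ℝ (Fin 3) :=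
    fun y => f.symm (-c + y) with hh
  have hsub : h ⁻¹' T ⊆ K ∩ {x | ⟪n, x - c⟫ ≥ 1 - ε} := by
    intro y hy
    set x : EuclideanSpace ℝ (Fin 3) := f.symm (-c + y) with hx
    have hyx : y - c = f x := by simp [hx]; abel
    obtain ⟨h1, h2, h3⟩ : (x 0) ^ 2 + (x 1) ^ 2 ≤ R ∧ a ≤ x 2 ∧ x 2 ≤ b := hy
    have hnormx : ‖x‖ ^ 2 ≤ 1 := by
      have : ‖x‖ = Real.sqrt (∑ i : Fin 3, ‖x i‖ ^ 2) := by
        rw [EuclideanSpace.norm_eq]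
      rw [this, Real.sq_sqrt (by positivity)]
      rw [Fin.sum_univ_three]
      simp only [Real.norm_eq_abs, sq_abs]
      nlinarith
    have hxball : y ∈ Metric.closedBall c 1 := by
      rw [Metric.mem_closedBall, dist_eq_norm, hyx, f.norm_map]
      nlinarith [norm_nonneg x]
    have hinner : ⟪n, y - c⟫ = x 2 := by
      rw [hyx, ← hfu, f.inner_map_map, hu, EuclideanSpace.inner_single_left]
      simp
    refine ⟨hball hxball, ?_⟩
    show ⟪n, y - c⟫ ≥ 1 - ε
    rw [hinner]; linarith
  -- measurability of T
  have hm01 : Measurable fun x : EuclideanSpace ℝ (Fin 3) => x 0 ^ 2 + x 1 ^ 2 :=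
    by fun_prop
  have hTmeas : MeasurableSet T :=
    (measurableSet_le hm01 measurable_const).inter
      ((by fun_prop : Measurable fun x : EuclideanSpace ℝ (Fin 3) => x 2) measurableSet_Icc)
  -- h is measure preserving
  have hmp : MeasurePreserving h volume volume :=
    f.symm.measurePreserving.comp (measurePreserving_add_left volume (-c))
  have hvolT : volume (h ⁻¹' T) = volume T :=
    hmp.measure_preimage hTmeas.nullMeasurableSet
  -- compute volume T
  have hvolTval : volume T = ENNReal.ofReal ((b - a) * (R * Real.pi)) := by
    set T' : Set (Fin 3 → ℝ) := {y | y 0 ^ 2 + y 1 ^ 2 ≤ R ∧ y 2 ∈ Set.Icc a b} with hT'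
    set D : Set (Fin 2 → ℝ) := {y | y 0 ^ 2 + y 1 ^ 2 ≤ R} with hD
    have hDmeas : MeasurableSet D :=
      measurableSet_le (((measurable_pi_apply 0).pow_const 2).add
        ((measurable_pi_apply 1).pow_const 2)) measurable_const
    have hT'meas : MeasurableSet T' :=
      (measurableSet_le (((measurable_pi_apply 0).pow_const 2).add
        ((measurable_pi_apply 1).pow_const 2)) measurable_const).inter
        ((measurable_pi_apply 2) measurableSet_Icc)
    have h1 : volume T = volume T' := by
      rw [← (EuclideanSpace.volume_preserving_symm_measurableEquiv_toLp
        (Fin 3)).measure_preimage hT'meas.nullMeasurableSet]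
      rfl
    have h2 : volume T' = volume (Set.Icc a b) * volume D := by
      have e := volume_preserving_piFinSuccAbove (fun _ : Fin 3 => ℝ) 2
      have hpre : (MeasurableEquiv.piFinSuccAbove (fun _ : Fin 3 => ℝ) 2) ⁻¹'
          (Set.Icc a b ×ˢ D) = T' := by
        ext x
        simp only [Set.mem_preimage, Set.mem_prod, hT', hD, Set.mem_setOf_eq]
        exact ⟨fun ⟨h1, h2⟩ => ⟨h2, h1⟩, fun ⟨h1, h2⟩ => ⟨h2, h1⟩⟩
      rw [← hpre, e.measure_preimage
        ((measurableSet_Icc.prod hDmeas).nullMeasurableSet), Measure.volume_eq_prod,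
        Measure.prod_prod]
    have h3 : volume D = ENNReal.ofReal R * ENNReal.ofReal Real.pi := by
      rw [← (EuclideanSpace.volume_preserving_symm_measurableEquiv_toLp
        (Fin 2)).measure_preimage hDmeas.nullMeasurableSet]
      have hpre : (MeasurableEquiv.toLp 2 (Fin 2 → ℝ)).symm ⁻¹' D =
          Metric.closedBall (0 : EuclideanSpace ℝ (Fin 2)) (Real.sqrt R) := by
        ext z
        simp only [Set.mem_preimage, Metric.mem_closedBall, dist_zero_right]
        have hz : (MeasurableEquiv.toLp 2 (Fin 2 → ℝ)).symm z 0 = z 0 := rfl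
        have hz1 : (MeasurableEquiv.toLp 2 (Fin 2 → ℝ)).symm z 1 = z 1 := rfl
        have hnorm : ‖z‖ ^ 2 = z 0 ^ 2 + z 1 ^ 2 := by
          rw [EuclideanSpace.norm_eq, Real.sq_sqrt (by positivity), Fin.sum_univ_two]
          simp [sq_abs]
        constructor
        · intro hmem
          have : ‖z‖ ^ 2 ≤ R := by rw [hnorm]; exact hmem
          calc ‖z‖ = Real.sqrt (‖z‖ ^ 2) := by rw [Real.sqrt_sq (norm_nonneg z)]
            _ ≤ Real.sqrt R := Real.sqrt_le_sqrt this
        · intro hle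
          show z 0 ^ 2 + z 1 ^ 2 ≤ R
          rw [← hnorm]
          calc ‖z‖ ^ 2 ≤ Real.sqrt R ^ 2 := by
                exact pow_le_pow_left₀ (norm_nonneg z) hle 2
            _ = R := Real.sq_sqrt hR0
      rw [hpre, EuclideanSpace.volume_closedBall]
      have hcard : Fintype.card (Fin 2) = 2 := Fintype.card_fin 2
      rw [hcard]
      have hg : Real.Gamma ((2 : ℕ) / 2 + 1) = 1 := by
        norm_num
      rw [hg]
      have : Real.sqrt Real.pi ^ 2 = Real.pi := Real.sq_sqrt Real.pi_pos.le
      rw [this]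
      rw [← ENNReal.ofReal_pow (Real.sqrt_nonneg R), Real.sq_sqrt hR0]
      norm_num
    rw [h1, h2, h3, Real.volume_Icc, ← ENNReal.ofReal_mul (by positivity),
      ← ENNReal.ofReal_mul (by linarith)]
  calc volume (K ∩ {x | ⟪n, x - c⟫ ≥ 1 - ε})
      ≥ volume (h ⁻¹' T) := measure_mono hsub
    _ = ENNReal.ofReal ((b - a) * (R * Real.pi)) := by rw [hvolT, hvolTval]
    _ ≥ ENNReal.ofReal (Real.pi * ε ^ 2 / 3) := by
        apply ENNReal.ofReal_le_ofReal
        have hπ := Real.pi_pos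
        simp only [ha, hb, hR]
        nlinarith [mul_nonneg (mul_nonneg hπ.le (sq_nonneg ε))
          (show (0:ℝ) ≤ 55 - 36 * ε by linarith)]
end

section
/- Let K be a nonempty compact convex subset of EuclideanSpace ℝ (Fin 3) and let s be a point of the frontier of Metric.cthickening 1 K. Then there exists exactly one unit vector u such that for all x ∈ Metric.cthickening 1 K, ⟪u, x⟫ ≤ ⟪u, s⟫; that is, the parallel body B(K) = Metric.cthickening 1 K has a unique supporting hyperplane (equivalently, a unique outer unit normal) at each of its boundary points. -/
open RealInnerProductSpace

lemma mem_cthick_iff {K : Set (EuclideanSpace ℝ (Fin 3))} (hKne : K.Nonempty)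
    (x : EuclideanSpace ℝ (Fin 3)) :
    x ∈ Metric.cthickening 1 K ↔ Metric.infDist x K ≤ 1 := by
  rw [Metric.mem_cthickening_iff, Metric.infDist,
    ENNReal.le_ofReal_iff_toReal_le (Metric.infEdist_ne_top hKne) (by norm_num)]

/-- Smoothness of the parallel body: `B(K) = Metric.cthickening 1 K` has a unique outer
unit normal at each of its boundary points. -/
theorem stmt_12 (K : Set (EuclideanSpace ℝ (Fin 3))) (hKne : K.Nonempty)
    (hKc : IsCompact K) (hKconv : Convex ℝ K)
    (s : EuclideanSpace ℝ (Fin 3)) (hs : s ∈ frontier (Metric.cthickening 1 K)) :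
    ∃! u : EuclideanSpace ℝ (Fin 3),
      ‖u‖ = 1 ∧ ∀ x ∈ Metric.cthickening 1 K, ⟪u, x⟫ ≤ ⟪u, s⟫ := by
  -- s has infDist exactly 1 from K
  have hsB : s ∈ Metric.cthickening 1 K :=
    (IsClosed.frontier_subset Metric.isClosed_cthickening) hs
  have hle : Metric.infDist s K ≤ 1 := (mem_cthick_iff hKne s).1 hsB
  have hnotint : s ∉ interior (Metric.cthickening 1 K) := hs.2
  have hge : 1 ≤ Metric.infDist s K := by
    by_contra h
    push_neg at h
    have : s ∈ Metric.thickening 1 K := (Metric.mem_thickening_iff_infDist_lt hKne).2 h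
    exact hnotint (interior_maximal (Metric.thickening_subset_cthickening 1 K)
      Metric.isOpen_thickening this)
  have hdist : Metric.infDist s K = 1 := le_antisymm hle hge
  -- nearest point p
  obtain ⟨p, hpK, hp⟩ := hKc.exists_infDist_eq_dist hKne s
  have hsp : ‖s - p‖ = 1 := by
    rw [← dist_eq_norm, ← hp, hdist]
  -- projection inequality: ∀ q ∈ K, ⟪s - p, q - p⟫ ≤ 0
  have hproj : ∀ q ∈ K, ⟪s - p, q - p⟫ ≤ 0 := by
    have hinf : ‖s - p‖ = ⨅ w : K, ‖s - w‖ := by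
      rw [← dist_eq_norm, ← hp, Metric.infDist_eq_iInf]
      simp only [dist_eq_norm]
    exact (norm_eq_iInf_iff_real_inner_le_zero hKconv hpK).1 hinf
  refine ⟨s - p, ⟨hsp, ?_⟩, ?_⟩
  · -- existence: s - p supports B at s
    intro x hx
    obtain ⟨q, hqK, hq⟩ := hKc.exists_infDist_eq_dist hKne x
    have hxq : ‖x - q‖ ≤ 1 := by
      rw [← dist_eq_norm, ← hq]; exact (mem_cthick_iff hKne x).1 hx
    have h1 : ⟪s - p, x - q⟫ ≤ 1 := by
      calc ⟪s - p, x - q⟫ ≤ ‖s - p‖ * ‖x - q‖ := real_inner_le_norm _ _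
        _ ≤ 1 := by rw [hsp, one_mul]; exact hxq
    have h2 : ⟪s - p, q - p⟫ ≤ 0 := hproj q hqK
    have h3 : ⟪s - p, p - s⟫ = -1 := by
      have : ⟪s - p, s - p⟫ = 1 := by
        rw [real_inner_self_eq_norm_sq, hsp]; norm_num
      rw [show (p - s : EuclideanSpace ℝ (Fin 3)) = -(s - p) by abel, inner_neg_right, this]
    have key : ⟪s - p, x - s⟫ ≤ 0 := by
      have : (x - s : EuclideanSpace ℝ (Fin 3)) = (x - q) + (q - p) + (p - s) := by abel
      rw [this, inner_add_right, inner_add_right, h3]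
      linarith
    have := key
    rw [inner_sub_right] at this
    linarith
  · -- uniqueness
    rintro u ⟨hu1, hu⟩
    -- p + u ∈ B
    have hpu : p + u ∈ Metric.cthickening 1 K := by
      rw [mem_cthick_iff hKne]
      calc Metric.infDist (p + u) K ≤ dist (p + u) p := Metric.infDist_le_dist_of_mem hpK
        _ = ‖u‖ := by rw [dist_eq_norm]; congr 1; abel
        _ = 1 := hu1
    have h4 : ⟪u, p + u⟫ ≤ ⟪u, s⟫ := hu _ hpu
    have h5 : (1 : ℝ) ≤ ⟪u, s - p⟫ := by
      rw [inner_add_right, real_inner_self_eq_norm_sq, hu1] at h4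
      rw [inner_sub_right]
      linarith
    have h6 : ⟪u, s - p⟫ ≤ 1 := by
      calc ⟪u, s - p⟫ ≤ ‖u‖ * ‖s - p‖ := real_inner_le_norm _ _
        _ = 1 := by rw [hu1, hsp, one_mul]
    have h7 : ⟪u, s - p⟫ = 1 := le_antisymm h6 h5
    exact (inner_eq_one_iff_of_norm_eq_one hu1 hsp).1 h7
end
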